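/- arXiv:1707.04341 — 12 statements merged into one kernel-verified Lean document; each statement's English description precedes it below -/
import Mathlib

section
/- Let X be a totally ordered set and F : X^n → X (n ≥ 2) an n-associative, idempotent, nondecreasing function. Then for every a, c ∈ X, F(a, c, c, ..., c) = F(a, a, ..., a, c), i.e., F(a, (n-1)·c) = F((n-1)·a, c). -/
/-- `innerApp n F x i` is `F (x i, x (i+1), ..., x (i+n-1))`. -/
def innerApp {X : Type*} (n : ℕ) (F : (Fin n → X) → X) (x : ℕ → X) (i : ℕ) : X :=
  F (fun k => x (i + (k : ℕ)))

/-- `compApp n F x i` is `F (x 0, ..., x (i-1), F (x i, ..., x (i+n-1)), x (i+n), ..., x (2n-2))`,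
i.e. `F` applied to the `(2n-1)`-tuple `x 0, ..., x (2n-2)` with the inner `F` at position `i`. -/
def compApp {X : Type*} (n : ℕ) (F : (Fin n → X) → X) (x : ℕ → X) (i : ℕ) : X :=
  F (fun j => if (j : ℕ) < i then x (j : ℕ)
      else if (j : ℕ) = i then innerApp n F x i
      else x ((j : ℕ) + n - 1))

/-- `F` is `n`-associative. -/
def NAssoc {X : Type*} (n : ℕ) (F : (Fin n → X) → X) : Prop :=
  ∀ (x : ℕ → X) (i : ℕ), i ≤ n - 1 → compApp n F x i = compApp n F x 0

/-- `F` is idempotent. -/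
def Idem {X : Type*} (n : ℕ) (F : (Fin n → X) → X) : Prop :=
  ∀ a : X, F (fun _ => a) = a

/-- `F` is nondecreasing in each variable. -/
def Nondecr {X : Type*} [Preorder X] (n : ℕ) (F : (Fin n → X) → X) : Prop :=
  ∀ x y : Fin n → X, (∀ j, x j ≤ y j) → F x ≤ F y

/-- `F` is monotone: every unary section is order-preserving or order-reversing. -/
def MonoSec {X : Type*} [Preorder X] (n : ℕ) (F : (Fin n → X) → X) : Prop :=
  ∀ (i : Fin n) (a : Fin n → X),
    Monotone (fun t => F (Function.update a i t)) ∨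
      Antitone (fun t => F (Function.update a i t))

/-- `F` is quasitrivial. -/
def Quasitrivial {X : Type*} (n : ℕ) (F : (Fin n → X) → X) : Prop :=
  ∀ x : Fin n → X, ∃ j, F x = x j

/-- `F` is symmetric. -/
def Symm {X : Type*} (n : ℕ) (F : (Fin n → X) → X) : Prop :=
  ∀ (σ : Equiv.Perm (Fin n)) (x : Fin n → X), F (x ∘ σ) = F x

/-- `iterComp G x k = x 0 ∘ x 1 ∘ ... ∘ x k` where `a ∘ b = G a b`. -/
def iterComp {X : Type*} (G : X → X → X) (x : ℕ → X) : ℕ → X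
  | 0 => x 0
  | k+1 => G (iterComp G x k) (x (k+1))

/-- `F` is derived from the binary operation `G`:
`F (x 0, ..., x (n-1)) = x 0 ∘ x 1 ∘ ... ∘ x (n-1)`. -/
def DerivedFrom {X : Type*} (n : ℕ) (F : (Fin n → X) → X) (G : X → X → X) : Prop :=
  ∀ x : ℕ → X, F (fun j => x (j : ℕ)) = iterComp G x (n - 1)

/-- `e` is a neutral element of the `n`-ary operation `F`. -/
def NeutralN {X : Type*} (n : ℕ) (F : (Fin n → X) → X) (e : X) : Prop :=
  ∀ (i : Fin n) (x : X), F (fun j => if j = i then x else e) = x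

theorem stmt0 {X : Type*} [LinearOrder X] (n : ℕ) (hn : 2 ≤ n)
    (F : (Fin n → X) → X) (hA : NAssoc n F) (hI : Idem n F) (hM : Nondecr n F)
    (a c : X) :
    F (fun j => if (j : ℕ) = 0 then a else c) =
      F (fun j => if (j : ℕ) = n - 1 then c else a) := by
  have hn1 : 1 ≤ n - 1 := by omega
  set u := F (fun j => if (j : ℕ) = 0 then a else c) with hu
  set v := F (fun j => if (j : ℕ) = n - 1 then c else a) with hv
  -- key identity 1 : u = F ((n-1)·a, u)
  have key1 : F (fun j : Fin n => if (j : ℕ) = n - 1 then u else a) = u := by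
    have h := hA (fun k => if k < n then a else c) (n - 1) le_rfl
    have hinner0 : innerApp n F (fun k => if k < n then a else c) 0 = a := by
      unfold innerApp
      have he : (fun k : Fin n => if 0 + (k : ℕ) < n then a else c) = fun _ => a := by
        funext k
        have hk := k.is_lt
        rw [if_pos (by omega)]
      rw [he, hI]
    have e0 : compApp n F (fun k => if k < n then a else c) 0 = u := by
      unfold compApp
      rw [hu]
      congr 1
      funext j
      have hk := j.is_lt
      beta_reduce
      simp only [hinner0]
      split_ifs <;> first | rfl | omega
    have hinner1 : innerApp n F (fun k => if k < n then a else c) (n - 1) = u := by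
      unfold innerApp
      rw [hu]
      congr 1
      funext k
      have hk := k.is_lt
      beta_reduce
      split_ifs <;> first | rfl | omega
    have e1 : compApp n F (fun k => if k < n then a else c) (n - 1)
        = F (fun j : Fin n => if (j : ℕ) = n - 1 then u else a) := by
      unfold compApp
      congr 1
      funext j
      have hk := j.is_lt
      beta_reduce
      simp only [hinner1]
      split_ifs <;> first | rfl | omega
    rw [e0, e1] at h
    exact h
  -- key identity 2 : v = F (v, (n-1)·c)
  have key2 : F (fun j : Fin n => if (j : ℕ) = 0 then v else c) = v := by
    have h := hA (fun k => if k < n - 1 then a else c) (n - 1) le_rfl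
    have hinner0 : innerApp n F (fun k => if k < n - 1 then a else c) 0 = v := by
      unfold innerApp
      rw [hv]
      congr 1
      funext k
      have hk := k.is_lt
      beta_reduce
      split_ifs <;> first | rfl | omega
    have e0 : compApp n F (fun k => if k < n - 1 then a else c) 0
        = F (fun j : Fin n => if (j : ℕ) = 0 then v else c) := by
      unfold compApp
      congr 1
      funext j
      have hk := j.is_lt
      beta_reduce
      simp only [hinner0]
      split_ifs <;> first | rfl | omega
    have hinner1 : innerApp n F (fun k => if k < n - 1 then a else c) (n - 1) = c := by
      unfold innerApp
      have he : (fun k : Fin n => if n - 1 + (k : ℕ) < n - 1 then a else c) = fun _ => c := by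
        funext k
        rw [if_neg (by omega)]
      rw [he, hI]
    have e1 : compApp n F (fun k => if k < n - 1 then a else c) (n - 1) = v := by
      unfold compApp
      rw [hv]
      congr 1
      funext j
      have hk := j.is_lt
      beta_reduce
      simp only [hinner1]
      split_ifs <;> first | rfl | omega
    rw [e0, e1] at h
    exact h.symm
  rcases le_total a c with hac | hca
  · -- case a ≤ c
    have huc : u ≤ c := by
      rw [hu]
      calc F (fun j : Fin n => if (j : ℕ) = 0 then a else c) ≤ F (fun _ => c) := by
            refine hM _ _ (fun j => ?_)
            split_ifs <;> first | exact le_rfl | exact hac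
        _ = c := hI c
    have huv : u ≤ v := by
      rw [← key1, hv]
      refine hM _ _ (fun j => ?_)
      split_ifs <;> first | exact le_rfl | exact huc
    have hvu : v ≤ u := by
      rw [hu, hv]
      refine hM _ _ (fun j => ?_)
      have hk := j.is_lt
      split_ifs <;> first | exact le_rfl | exact hac | omega
    exact le_antisymm huv hvu
  · -- case c ≤ a
    have huv : u ≤ v := by
      rw [hu, hv]
      refine hM _ _ (fun j => ?_)
      have hk := j.is_lt
      split_ifs <;> first | exact le_rfl | exact hca | omega
    have hva : v ≤ a := by
      rw [hv]
      calc F (fun j : Fin n => if (j : ℕ) = n - 1 then c else a) ≤ F (fun _ => a) := by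
            refine hM _ _ (fun j => ?_)
            split_ifs <;> first | exact le_rfl | exact hca
        _ = a := hI a
    have hvu : v ≤ u := by
      rw [← key2, hu]
      refine hM _ _ (fun j => ?_)
      split_ifs <;> first | exact le_rfl | exact hva
    exact le_antisymm huv hvu
end

section
/- Let X be a totally ordered set and F : X^n → X an n-associative, idempotent, nondecreasing function. Then for all a, c ∈ X and all 1 ≤ k ≤ n-1, the value F(k·a, (n-k)·c) is the same for every such k; in particular F(k·a,(n-k)·c) = F((n-1)·a, c). -/
theorem stmt1 {X : Type*} [LinearOrder X] (n : ℕ) (hn : 2 ≤ n)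
    (F : (Fin n → X) → X) (hA : NAssoc n F) (hI : Idem n F) (hM : Nondecr n F)
    (a c : X) (k : ℕ) (hk1 : 1 ≤ k) (hk2 : k ≤ n - 1) :
    F (fun j => if (j : ℕ) < k then a else c) =
      F (fun j => if (j : ℕ) < n - 1 then a else c) := by
  set x : ℕ → X := fun j => if j < k + n - 1 then a else c with hx
  set g : X := F (fun j => if (j : ℕ) < k then a else c) with hg
  have h0 : compApp n F x 0 = g := by
    unfold compApp innerApp
    have hinner : (fun k' : Fin n => x (0 + (k' : ℕ))) = fun _ => a := by
      funext k'
      have := k'.isLt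
      simp only [hx]
      rw [if_pos (by omega)]
    rw [hinner, hI, hg]
    congr 1
    funext j
    simp only [Nat.not_lt_zero, if_false, hx]
    by_cases hj : (j : ℕ) = 0
    · rw [if_pos hj, if_pos (by omega)]
    · rw [if_neg hj]
      by_cases hjk : (j : ℕ) < k
      · rw [if_pos (by omega), if_pos hjk]
      · rw [if_neg (by omega), if_neg hjk]
  have h1 : compApp n F x (n - 1) = F (fun j => if (j : ℕ) < n - 1 then a else g) := by
    unfold compApp innerApp
    have hinner : (fun k' : Fin n => x (n - 1 + (k' : ℕ))) =
        (fun j : Fin n => if (j : ℕ) < k then a else c) := by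
      funext k'
      simp only [hx]
      by_cases h : (k' : ℕ) < k
      · rw [if_pos (by omega), if_pos h]
      · rw [if_neg (by omega), if_neg h]
    rw [hinner, ← hg]
    congr 1
    funext j
    have hjn := j.isLt
    by_cases hj : (j : ℕ) < n - 1
    · rw [if_pos hj, if_pos hj, hx]
      simp only
      rw [if_pos (by omega)]
    · rw [if_neg hj, if_pos (by omega : (j : ℕ) = n - 1), if_neg hj]
  have key : g = F (fun j => if (j : ℕ) < n - 1 then a else g) := by
    rw [← h1, ← h0, hA x (n - 1) le_rfl]
  rcases le_total a c with hac | hca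
  · have hgc : g ≤ c := by
      calc g ≤ F (fun _ => c) := by
              apply hM
              intro j
              split_ifs
              · exact hac
              · exact le_rfl
        _ = c := hI c
    have hle : g ≤ F (fun j => if (j : ℕ) < n - 1 then a else c) := by
      rw [key]
      apply hM
      intro j
      split_ifs
      · exact le_rfl
      · exact hgc
    have hge : F (fun j => if (j : ℕ) < n - 1 then a else c) ≤ g := by
      rw [hg]
      apply hM
      intro j
      split_ifs <;> first | exact le_rfl | exact hac | (exfalso; omega)
    exact le_antisymm hle hge
  · have hcg : c ≤ g := by
      calc c = F (fun _ => c) := (hI c).symm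
        _ ≤ g := by
              rw [hg]
              apply hM
              intro j
              split_ifs
              · exact hca
              · exact le_rfl
    have hle : g ≤ F (fun j => if (j : ℕ) < n - 1 then a else c) := by
      rw [hg]
      apply hM
      intro j
      split_ifs <;> first | exact le_rfl | exact hca | (exfalso; omega)
    have hge : F (fun j => if (j : ℕ) < n - 1 then a else c) ≤ g := by
      conv_rhs => rw [key]
      apply hM
      intro j
      split_ifs
      · exact le_rfl
      · exact hcg
    exact le_antisymm hle hge
end

section
/- Let X be a totally ordered set and F : X^n → X an n-associative, idempotent, nondecreasing function. Define G : X^2 → X by G(a,c) = F(a, (n-1)·c). Then G is associative, idempotent and nondecreasing. -/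
theorem stmt2 {X : Type*} [LinearOrder X] (n : ℕ) (hn : 2 ≤ n)
    (F : (Fin n → X) → X) (hA : NAssoc n F) (hI : Idem n F) (hM : Nondecr n F)
    (G : X → X → X)
    (hG : ∀ a c, G a c = F (fun j => if (j : ℕ) = 0 then a else c)) :
    (∀ a b c, G (G a b) c = G a (G b c)) ∧
    (∀ a, G a a = a) ∧
    (∀ a b a' b', a ≤ a' → b ≤ b' → G a b ≤ G a' b') := by
  obtain ⟨m, rfl⟩ : ∃ m, n = m + 2 := ⟨n - 2, by omega⟩
  -- alternative formula for G
  have hG' : ∀ a c : X, G a c = F (fun j => if (j : ℕ) < 1 then a else c) := by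
    intro a c
    rw [hG]
    congr 1; funext j
    simp [Nat.lt_one_iff]
  -- Key lemma : F(a, c, ..., c) = F(a, ..., a, c)
  have keyL : ∀ a c : X,
      F (fun j => if (j : ℕ) < 1 then a else c)
        = F (fun j => if (j : ℕ) < m + 1 then a else c) := by
    intro a c
    set D : ℕ → X := fun k => F (fun j : Fin (m+2) => if (j : ℕ) < k then a else c) with hD
    -- first sequence : m+1 copies of a, then c's
    have h11 := hA (fun j => if j < m + 1 then a else c) 1 (by omega)
    have h1m := hA (fun j => if j < m + 1 then a else c) (m+1) (by omega)
    have e1 : compApp (m+2) F (fun j => if j < m + 1 then a else c) 1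
        = F (fun j : Fin (m+2) => if (j : ℕ) = 0 then a
            else if (j : ℕ) = 1 then D m else c) := by
      have hin : innerApp (m+2) F (fun j => if j < m + 1 then a else c) 1 = D m := by
        unfold innerApp
        rw [hD]
        congr 1; funext k
        rcases k with ⟨k, hk⟩
        dsimp only
        split_ifs <;> first | rfl | (exfalso; omega)
      unfold compApp
      rw [hin]
      congr 1; funext j
      rcases j with ⟨j, hj⟩
      dsimp only
      split_ifs <;> first | rfl | (exfalso; omega)
    have e2 : compApp (m+2) F (fun j => if j < m + 1 then a else c) (m+1) = D (m+1) := by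
      have hin : innerApp (m+2) F (fun j => if j < m + 1 then a else c) (m+1) = c := by
        unfold innerApp
        have : (fun k : Fin (m+2) => if m + 1 + (k : ℕ) < m + 1 then a else c)
            = fun _ => c := by
          funext k; split_ifs <;> first | rfl | (exfalso; omega)
        rw [this]
        exact hI c
      unfold compApp
      rw [hin, hD]
      congr 1; funext j
      rcases j with ⟨j, hj⟩
      dsimp only
      split_ifs <;> first | rfl | (exfalso; omega)
    have I1 : F (fun j : Fin (m+2) => if (j : ℕ) = 0 then a
        else if (j : ℕ) = 1 then D m else c) = D (m+1) := by
      rw [← e1, ← e2, h11, h1m]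
    -- second sequence : m+2 copies of a, then c's
    have h21 := hA (fun j => if j < m + 2 then a else c) 1 (by omega)
    have e3 : compApp (m+2) F (fun j => if j < m + 2 then a else c) 1
        = F (fun j : Fin (m+2) => if (j : ℕ) = 0 then a
            else if (j : ℕ) = 1 then D (m+1) else c) := by
      have hin : innerApp (m+2) F (fun j => if j < m + 2 then a else c) 1 = D (m+1) := by
        unfold innerApp
        rw [hD]
        congr 1; funext k
        rcases k with ⟨k, hk⟩
        dsimp only
        split_ifs <;> first | rfl | (exfalso; omega)
      unfold compApp
      rw [hin]
      congr 1; funext j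
      rcases j with ⟨j, hj⟩
      dsimp only
      split_ifs <;> first | rfl | (exfalso; omega)
    have e4 : compApp (m+2) F (fun j => if j < m + 2 then a else c) 0 = D 1 := by
      have hin : innerApp (m+2) F (fun j => if j < m + 2 then a else c) 0 = a := by
        unfold innerApp
        have : (fun k : Fin (m+2) => if 0 + (k : ℕ) < m + 2 then a else c)
            = fun _ => a := by
          funext k; rcases k with ⟨k, hk⟩; dsimp only
          split_ifs <;> first | rfl | (exfalso; omega)
        rw [this]
        exact hI a
      unfold compApp
      rw [hin, hD]
      congr 1; funext j
      rcases j with ⟨j, hj⟩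
      dsimp only
      split_ifs <;> first | rfl | (exfalso; omega)
    have I2 : F (fun j : Fin (m+2) => if (j : ℕ) = 0 then a
        else if (j : ℕ) = 1 then D (m+1) else c) = D 1 := by
      rw [← e3, ← e4, h21]
    show D 1 = D (m+1)
    rcases le_total a c with hac | hca
    · have hd1 : D (m+1) ≤ D 1 := by
        apply hM
        intro j
        split_ifs <;> first | exact le_refl _ | exact hac | (exfalso; omega)
      have hdm : D (m+1) ≤ D m := by
        apply hM
        intro j
        split_ifs <;> first | exact le_refl _ | exact hac | (exfalso; omega)
      have hup : D 1 ≤ D (m+1) := by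
        rw [← I1, ← I2]
        apply hM
        intro j
        split_ifs <;> first | exact le_refl _ | exact hdm | (exfalso; omega)
      exact le_antisymm hup hd1
    · have hd1 : D 1 ≤ D (m+1) := by
        apply hM
        intro j
        split_ifs <;> first | exact le_refl _ | exact hca | (exfalso; omega)
      have hdm : D m ≤ D (m+1) := by
        apply hM
        intro j
        split_ifs <;> first | exact le_refl _ | exact hca | (exfalso; omega)
      have hup : D (m+1) ≤ D 1 := by
        rw [← I1, ← I2]
        apply hM
        intro j
        split_ifs <;> first | exact le_refl _ | exact hdm | (exfalso; omega)
      exact le_antisymm hd1 hup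
  refine ⟨?_, ?_, ?_⟩
  · -- associativity
    intro a b c
    have h := hA (fun j => if j < m + 1 then a else if j = m + 1 then b else c) (m+1)
      (by omega)
    have e5 : compApp (m+2) F (fun j => if j < m + 1 then a else if j = m + 1 then b else c)
        (m+1) = G a (G b c) := by
      have hin : innerApp (m+2) F
          (fun j => if j < m + 1 then a else if j = m + 1 then b else c) (m+1)
          = G b c := by
        unfold innerApp
        rw [hG]
        congr 1; funext k
        rcases k with ⟨k, hk⟩
        dsimp only
        split_ifs <;> first | rfl | (exfalso; omega)
      unfold compApp
      rw [hin, hG' a (G b c), keyL a (G b c)]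
      congr 1; funext j
      rcases j with ⟨j, hj⟩
      dsimp only
      split_ifs <;> first | rfl | (exfalso; omega)
    have e6 : compApp (m+2) F (fun j => if j < m + 1 then a else if j = m + 1 then b else c)
        0 = G (G a b) c := by
      have hin : innerApp (m+2) F
          (fun j => if j < m + 1 then a else if j = m + 1 then b else c) 0
          = G a b := by
        unfold innerApp
        rw [hG' a b, keyL a b]
        congr 1; funext k
        rcases k with ⟨k, hk⟩
        dsimp only
        split_ifs <;> first | rfl | (exfalso; omega)
      unfold compApp
      rw [hin, hG (G a b) c]
      congr 1; funext j
      rcases j with ⟨j, hj⟩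
      dsimp only
      split_ifs <;> first | rfl | (exfalso; omega)
    rw [← e5, ← e6, h]
  · -- idempotency
    intro a
    rw [hG]
    simpa using hI a
  · -- monotonicity
    intro a b a' b' ha hb
    rw [hG, hG]
    apply hM
    intro j
    split_ifs
    · exact ha
    · exact hb
end

section
/- Let X be a totally ordered set and F : X^3 → X a 3-associative, idempotent, nondecreasing function. Define G(a,c) = F(a,c,c) (= F(a,a,c)). Then F(a,b,c) = G(G(a,b),c) = G(a,G(b,c)) for all a,b,c ∈ X; in particular F is derived from the associative binary function G. -/
theorem stmt4 {X : Type*} [LinearOrder X] (F : X → X → X → X)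
    (hA : ∀ a b c d e, F (F a b c) d e = F a (F b c d) e ∧
          F a (F b c d) e = F a b (F c d e))
    (hI : ∀ x, F x x x = x)
    (hM : ∀ a a' b b' c c', a ≤ a' → b ≤ b' → c ≤ c' → F a b c ≤ F a' b' c')
    (G : X → X → X) (hG : ∀ a c, G a c = F a c c) :
    (∀ a c, F a c c = F a a c) ∧
    ∀ a b c, F a b c = G (G a b) c ∧ F a b c = G a (G b c) := by
  have h1 : ∀ a c, F a c c = F a a c := by
    intro a c
    have e1 : F a c c = F a (F a a c) c := by
      have h := (hA a a a c c).1
      rw [hI a] at h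
      exact h
    have e2 : F a (F a c c) c = F a a c := by
      have h := (hA a a c c c).2
      rw [hI c] at h
      exact h
    rcases le_total (F a a c) (F a c c) with h | h
    · refine le_antisymm ?_ h
      calc F a c c = F a (F a a c) c := e1
        _ ≤ F a (F a c c) c := hM _ _ _ _ _ _ le_rfl h le_rfl
        _ = F a a c := e2
    · refine le_antisymm h ?_
      calc F a a c = F a (F a c c) c := e2.symm
        _ ≤ F a (F a a c) c := hM _ _ _ _ _ _ le_rfl h le_rfl
        _ = F a c c := e1.symm
  refine ⟨h1, fun a b c => ?_⟩
  -- key identities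
  have k1 : F (F a b b) c c = F a (F b b c) c := (hA a b b c c).1
  have k2 : F a (F b b c) c = F a b (F b c c) := (hA a b b c c).2
  -- first equality: F a b c = F (F a b b) c c
  have eq1 : F a b c = F (F a b b) c c := by
    rcases le_total b c with h | h
    · refine le_antisymm ?_ ?_
      · rw [k1]
        have : b ≤ F b b c := by
          conv_lhs => rw [← hI b]
          exact hM _ _ _ _ _ _ le_rfl le_rfl h
        exact hM _ _ _ _ _ _ le_rfl this le_rfl
      · rw [k1, k2]
        have : F b c c ≤ c := by
          conv_rhs => rw [← hI c]
          exact hM _ _ _ _ _ _ h le_rfl le_rfl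
        exact hM _ _ _ _ _ _ le_rfl le_rfl this
    · refine le_antisymm ?_ ?_
      · rw [k1, k2]
        have : c ≤ F b c c := by
          conv_lhs => rw [← hI c]
          exact hM _ _ _ _ _ _ h le_rfl le_rfl
        exact hM _ _ _ _ _ _ le_rfl le_rfl this
      · rw [k1]
        have : F b b c ≤ b := by
          conv_rhs => rw [← hI b]
          exact hM _ _ _ _ _ _ le_rfl le_rfl h
        exact hM _ _ _ _ _ _ le_rfl this le_rfl
  have m1 : F (F a a b) b c = F a (F a b b) c := (hA a a b b c).1
  have m2 : F a (F a b b) c = F a a (F b b c) := (hA a a b b c).2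
  have eq2 : F a b c = F a a (F b b c) := by
    rcases le_total a b with h | h
    · refine le_antisymm ?_ ?_
      · rw [← m2, ← m1]
        have : a ≤ F a a b := by
          conv_lhs => rw [← hI a]
          exact hM _ _ _ _ _ _ le_rfl le_rfl h
        exact hM _ _ _ _ _ _ this le_rfl le_rfl
      · rw [← m2]
        have : F a b b ≤ b := by
          conv_rhs => rw [← hI b]
          exact hM _ _ _ _ _ _ h le_rfl le_rfl
        exact hM _ _ _ _ _ _ le_rfl this le_rfl
    · refine le_antisymm ?_ ?_
      · rw [← m2]
        have : b ≤ F a b b := by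
          conv_lhs => rw [← hI b]
          exact hM _ _ _ _ _ _ h le_rfl le_rfl
        exact hM _ _ _ _ _ _ le_rfl this le_rfl
      · rw [← m2, ← m1]
        have : F a a b ≤ a := by
          conv_rhs => rw [← hI a]
          exact hM _ _ _ _ _ _ le_rfl le_rfl h
        exact hM _ _ _ _ _ _ this le_rfl le_rfl
  constructor
  · rw [hG, hG]
    exact eq1
  · rw [hG, hG]
    rw [h1 a (F b c c), h1 b c]
    exact eq2
end

section
/- Let X be a totally ordered set, a,b,c ∈ X with a ≤ b ≤ c, and F : X^3 → X a 3-associative, idempotent, nondecreasing function. Then F(a,b,c) = F(a,c,c) = F(a,a,c); i.e., the value of F on a monotone triple depends only on the endpoints. -/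
theorem stmt5 {X : Type*} [LinearOrder X] (F : X → X → X → X)
    (hA : ∀ a b c d e, F (F a b c) d e = F a (F b c d) e ∧
          F a (F b c d) e = F a b (F c d e))
    (hI : ∀ x, F x x x = x)
    (hM : ∀ a a' b b' c c', a ≤ a' → b ≤ b' → c ≤ c' → F a b c ≤ F a' b' c')
    (a b c : X) (hab : a ≤ b) (hbc : b ≤ c) :
    F a b c = F a c c ∧ F a b c = F a a c := by
  have hac : a ≤ c := hab.trans hbc
  -- v = F a c c satisfies F a a v = v
  have hv : F a a (F a c c) = F a c c := by
    have h := (hA a a a c c)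
    rw [← h.2, ← h.1, hI a]
  have hvc : F a c c ≤ c := by
    calc F a c c ≤ F c c c := hM _ _ _ _ _ _ hac le_rfl le_rfl
    _ = c := hI c
  have key : F a c c ≤ F a a c := by
    calc F a c c = F a a (F a c c) := hv.symm
    _ ≤ F a a c := hM _ _ _ _ _ _ le_rfl le_rfl hvc
  have h1 : F a a c ≤ F a b c := hM _ _ _ _ _ _ le_rfl hab le_rfl
  have h2 : F a b c ≤ F a c c := hM _ _ _ _ _ _ le_rfl hbc le_rfl
  constructor
  · exact le_antisymm h2 (key.trans h1)
  · exact le_antisymm (h2.trans key) h1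
end

section
/- Let X be a totally ordered set and F : X^n → X (n ≥ 3) an n-associative, idempotent, nondecreasing function. Then for every 1 ≤ i ≤ n-2 and x_1,...,x_{n-1} ∈ X: F(x_1,...,x_{i-1}, x_i, x_i, x_{i+1},...,x_{n-1}) = F(x_1,...,x_i, x_{i+1}, x_{i+1}, x_{i+2},...,x_{n-1}) (doubling the i-th argument gives the same value as doubling the (i+1)-st). -/
theorem stmt6 {X : Type*} [LinearOrder X] (n : ℕ) (hn : 3 ≤ n)
    (F : (Fin n → X) → X) (hA : NAssoc n F) (hI : Idem n F) (hM : Nondecr n F)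
    (x : ℕ → X) (i : ℕ) (hi : i + 3 ≤ n) :
    F (fun j => if (j : ℕ) ≤ i then x (j : ℕ) else x ((j : ℕ) - 1)) =
      F (fun j => if (j : ℕ) ≤ i + 1 then x (j : ℕ) else x ((j : ℕ) - 1)) := by
  -- u = F(x i, ..., x i, x (i+1)), v = F(x i, x (i+1), ..., x (i+1))
  set u := F (fun k : Fin n => if (k : ℕ) < n - 1 then x i else x (i+1)) with hu
  set v := F (fun k : Fin n => if (k : ℕ) = 0 then x i else x (i+1)) with hv
  -- g t = F(x 0, ..., x i, t, x (i+1), ..., x (n-2))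
  set g : X → X := fun t => F (fun j : Fin n => if (j : ℕ) ≤ i then x (j : ℕ)
      else if (j : ℕ) = i + 1 then t else x ((j : ℕ) - 1)) with hg
  -- sequence w : x 0 .. x (i-1), (x i)×n, x (i+1), x (i+1), x (i+2), ..., x (n-2)
  set w : ℕ → X := fun k => if k < i then x k else if k < i + n then x i
      else if k ≤ i + n + 1 then x (i+1) else x (k - n) with hw
  -- sequence w2 : x 0 .. x i, x i, (x (i+1))×n, x (i+2), ..., x (n-2)
  set w2 : ℕ → X := fun k => if k ≤ i then x k else if k ≤ i + 1 then x i
      else if k < i + n + 2 then x (i+1) else x (k - n) with hw2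
  have hinner_w_i : innerApp n F w i = x i := by
    have : (fun k : Fin n => w (i + (k : ℕ))) = fun _ => x i := by
      funext k
      have hk := k.isLt
      simp only [hw]
      rw [if_neg (by omega), if_pos (by omega)]
    rw [innerApp, this, hI]
  have hinner_w_i1 : innerApp n F w (i+1) = u := by
    rw [innerApp, hu]
    congr 1
    funext k
    have hk := k.isLt
    simp only [hw]
    split_ifs <;> first | rfl | omega | (congr 1; omega) | (exfalso; omega)
  have hinner_w2_i2 : innerApp n F w2 (i+2) = x (i+1) := by
    have : (fun k : Fin n => w2 (i + 2 + (k : ℕ))) = fun _ => x (i+1) := by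
      funext k
      have hk := k.isLt
      simp only [hw2]
      rw [if_neg (by omega), if_neg (by omega), if_pos (by omega)]
    rw [innerApp, this, hI]
  have hinner_w2_i1 : innerApp n F w2 (i+1) = v := by
    rw [innerApp, hv]
    congr 1
    funext k
    have hk := k.isLt
    simp only [hw2]
    split_ifs <;> first | rfl | omega | (congr 1; omega) | (exfalso; omega)
  -- RHS = g u
  have hRHS : F (fun j : Fin n => if (j : ℕ) ≤ i + 1 then x (j : ℕ) else x ((j : ℕ) - 1)) = g u := by
    have e1 : compApp n F w i
        = F (fun j : Fin n => if (j : ℕ) ≤ i + 1 then x (j : ℕ) else x ((j : ℕ) - 1)) := by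
      rw [compApp, hinner_w_i]
      congr 1
      funext j
      have hj := j.isLt
      simp only [hw]
      split_ifs <;> first | rfl | omega | (congr 1; omega) | (exfalso; omega)
    have e2 : compApp n F w (i+1) = g u := by
      rw [compApp, hinner_w_i1, hg]
      congr 1
      funext j
      have hj := j.isLt
      simp only [hw]
      split_ifs <;> first | rfl | omega | (congr 1; omega) | (exfalso; omega)
    rw [← e1, hA w i (by omega), ← hA w (i+1) (by omega), e2]
  -- LHS = g v
  have hLHS : F (fun j : Fin n => if (j : ℕ) ≤ i then x (j : ℕ) else x ((j : ℕ) - 1)) = g v := by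
    have e1 : compApp n F w2 (i+2)
        = F (fun j : Fin n => if (j : ℕ) ≤ i then x (j : ℕ) else x ((j : ℕ) - 1)) := by
      rw [compApp, hinner_w2_i2]
      congr 1
      funext j
      have hj := j.isLt
      simp only [hw2]
      split_ifs <;> first | rfl | omega | (congr 1; omega) | (exfalso; omega)
    have e2 : compApp n F w2 (i+1) = g v := by
      rw [compApp, hinner_w2_i1, hg]
      congr 1
      funext j
      have hj := j.isLt
      simp only [hw2]
      split_ifs <;> first | rfl | omega | (congr 1; omega) | (exfalso; omega)
    rw [← e1, hA w2 (i+2) (by omega), ← hA w2 (i+1) (by omega), e2]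
  have gmono : ∀ s t : X, s ≤ t → g s ≤ g t := by
    intro s t hst
    apply hM
    intro j
    split_ifs <;> first | exact le_refl _ | exact hst
  rcases le_total (x i) (x (i+1)) with hle | hle
  · apply le_antisymm
    · apply hM
      intro j
      split_ifs with h1 h2 h3
      · exact le_refl _
      · exfalso; omega
      · have e1 : (j : ℕ) - 1 = i := by omega
        have e2 : (j : ℕ) = i + 1 := by omega
        rw [e1, e2]; exact hle
      · exact le_refl _
    · have huv : u ≤ v := by
        apply hM
        intro k
        have hk := k.isLt
        split_ifs <;> first | exact le_refl _ | exact hle | (exfalso; omega)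
      rw [hRHS, hLHS]
      exact gmono u v huv
  · apply le_antisymm
    · have hvu : v ≤ u := by
        apply hM
        intro k
        have hk := k.isLt
        split_ifs <;> first | exact le_refl _ | exact hle | (exfalso; omega)
      rw [hRHS, hLHS]
      exact gmono v u hvu
    · apply hM
      intro j
      split_ifs with h1 h2 h3
      · exact le_refl _
      · have e1 : (j : ℕ) - 1 = i := by omega
        have e2 : (j : ℕ) = i + 1 := by omega
        rw [e1, e2]; exact hle
      · exfalso; omega
      · exact le_refl _
end

section
/- Let X be a totally ordered set and F : X^n → X (n ≥ 3) an n-associative, idempotent, nondecreasing function. Define H : X^{n-1} → X by H(x_1,...,x_{n-1}) = F(x_1, x_1, x_2,...,x_{n-1}). Then H is (n-1)-associative, idempotent, and nondecreasing. -/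
section AuxStmt7

/-- double the `j`-th entry of a sequence -/
def dbl {X : Type*} (x : ℕ → X) (j : ℕ) : ℕ → X := fun k => if k ≤ j then x k else x (k - 1)

/-- `F` applied to the first `n` entries of `x` with entry `j` doubled. -/
def DD {X : Type*} (n : ℕ) (F : (Fin n → X) → X) (x : ℕ → X) (j : ℕ) : X :=
  F fun k : Fin n => dbl x j (k : ℕ)

/-- the tuple `(x 0,...,x (j-1), (x j)^n, x (j+1), x (j+1), x (j+2), ...)` -/
def tt1 {X : Type*} (n : ℕ) (x : ℕ → X) (j : ℕ) : ℕ → X := fun k =>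
  if k < j then x k else if k < j + n then x j else if k < j + n + 2 then x (j+1) else x (k - n)

/-- the tuple `(x 0,...,x (j-1), x j, x j, (x (j+1))^n, x (j+2), ...)` -/
def tt2 {X : Type*} (n : ℕ) (x : ℕ → X) (j : ℕ) : ℕ → X := fun k =>
  if k < j then x k else if k < j + 2 then x j else if k < j + n + 2 then x (j+1) else x (k - n)

/-- the tuple `x` with entries `i` and `i+n-1` doubled -/
def yy {X : Type*} (n : ℕ) (x : ℕ → X) (i : ℕ) : ℕ → X := fun k =>
  if k ≤ i then x k else if k = i + 1 then x i else if k ≤ i + n then x (k-1) else x (k-2)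

/-- the outer tuple of `compApp m H x i`, with a shift built from `n`. -/
def zz {X : Type*} (n m : ℕ) (H : (Fin m → X) → X) (x : ℕ → X) (i : ℕ) : ℕ → X := fun p =>
  if p < i then x p else if p = i then innerApp m H x i else x (p + n - 2)

theorem DD_adjacent {X : Type*} [LinearOrder X] {n : ℕ} (hn : 3 ≤ n)
    {F : (Fin n → X) → X} (hA : NAssoc n F) (hI : Idem n F) (hM : Nondecr n F)
    (x : ℕ → X) (j : ℕ) (hj : j + 3 ≤ n) :
    DD n F x j = DD n F x (j + 1) := by
  have h1 : innerApp n F (tt1 n x j) j = x j := by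
    unfold innerApp
    have he : (fun k : Fin n => tt1 n x j (j + (k : ℕ))) = fun _ => x j := by
      refine funext fun k => ?_
      have hk := k.isLt
      simp only [tt1]
      split_ifs <;> first | rfl | omega
    rw [he]; exact hI _
  have h2 : innerApp n F (tt2 n x j) (j+2) = x (j+1) := by
    unfold innerApp
    have he : (fun k : Fin n => tt2 n x j (j + 2 + (k : ℕ))) = fun _ => x (j+1) := by
      refine funext fun k => ?_
      have hk := k.isLt
      simp only [tt2]
      split_ifs <;> first | rfl | omega
    rw [he]; exact hI _
  have e1 : compApp n F (tt1 n x j) j = DD n F x (j+1) := by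
    unfold compApp DD
    simp only [h1]
    refine congrArg F (funext fun p => ?_)
    have hp := p.isLt
    simp only [tt1, dbl]
    split_ifs <;> first | rfl | omega | exact congrArg x (by omega)
  have e3 : compApp n F (tt2 n x j) (j+2) = DD n F x j := by
    unfold compApp DD
    simp only [h2]
    refine congrArg F (funext fun p => ?_)
    have hp := p.isLt
    simp only [tt2, dbl]
    split_ifs <;> first | rfl | omega | exact congrArg x (by omega)
  have l1 : compApp n F (tt1 n x j) j = compApp n F (tt1 n x j) (j+1) :=
    (hA _ j (by omega)).trans (hA _ (j+1) (by omega)).symm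
  have l2 : compApp n F (tt2 n x j) (j+2) = compApp n F (tt2 n x j) (j+1) :=
    (hA _ (j+2) (by omega)).trans (hA _ (j+1) (by omega)).symm
  have hd : x j ≤ x (j+1) →
      innerApp n F (tt1 n x j) (j+1) ≤ innerApp n F (tt2 n x j) (j+1) := by
    intro hab
    unfold innerApp
    refine hM _ _ fun k => ?_
    have hk := k.isLt
    simp only [tt1, tt2]
    split_ifs <;> first | omega | exact le_rfl | exact hab
  have hd' : x (j+1) ≤ x j →
      innerApp n F (tt2 n x j) (j+1) ≤ innerApp n F (tt1 n x j) (j+1) := by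
    intro hba
    unfold innerApp
    refine hM _ _ fun k => ?_
    have hk := k.isLt
    simp only [tt1, tt2]
    split_ifs <;> first | omega | exact le_rfl | exact hba
  have hcmp : x j ≤ x (j+1) →
      compApp n F (tt1 n x j) (j+1) ≤ compApp n F (tt2 n x j) (j+1) := by
    intro hab
    unfold compApp
    refine hM _ _ fun p => ?_
    have hp := p.isLt
    by_cases hpj : (p : ℕ) = j + 1
    · simp only [if_neg (show ¬((p:ℕ) < j + 1) from by omega), if_pos hpj]
      exact hd hab
    · refine le_of_eq ?_
      simp only [tt1, tt2]
      split_ifs <;> first | rfl | omega | exact congrArg x (by omega)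
  have hcmp' : x (j+1) ≤ x j →
      compApp n F (tt2 n x j) (j+1) ≤ compApp n F (tt1 n x j) (j+1) := by
    intro hba
    unfold compApp
    refine hM _ _ fun p => ?_
    have hp := p.isLt
    by_cases hpj : (p : ℕ) = j + 1
    · simp only [if_neg (show ¬((p:ℕ) < j + 1) from by omega), if_pos hpj]
      exact hd' hba
    · refine le_of_eq ?_
      simp only [tt1, tt2]
      split_ifs <;> first | rfl | omega | exact congrArg x (by omega)
  have hdir : x j ≤ x (j+1) → DD n F x j ≤ DD n F x (j+1) := by
    intro hab
    unfold DD
    refine hM _ _ fun k => ?_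
    simp only [dbl]
    split_ifs with ha hb
    · exact le_rfl
    · omega
    · have e : (k:ℕ) - 1 = j := by omega
      have e2 : (k:ℕ) = j + 1 := by omega
      rw [e, e2]
      exact hab
    · exact le_rfl
  have hdir' : x (j+1) ≤ x j → DD n F x (j+1) ≤ DD n F x j := by
    intro hba
    unfold DD
    refine hM _ _ fun k => ?_
    simp only [dbl]
    split_ifs with ha hb
    · exact le_rfl
    · have e2 : (k:ℕ) = j + 1 := by omega
      rw [e2, Nat.add_sub_cancel]
      exact hba
    · omega
    · exact le_rfl
  rcases le_total (x j) (x (j+1)) with hab | hba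
  · refine le_antisymm (hdir hab) ?_
    calc DD n F x (j+1) = compApp n F (tt1 n x j) j := e1.symm
      _ = compApp n F (tt1 n x j) (j+1) := l1
      _ ≤ compApp n F (tt2 n x j) (j+1) := hcmp hab
      _ = compApp n F (tt2 n x j) (j+2) := l2.symm
      _ = DD n F x j := e3
  · refine le_antisymm ?_ (hdir' hba)
    calc DD n F x j = compApp n F (tt2 n x j) (j+2) := e3.symm
      _ = compApp n F (tt2 n x j) (j+1) := l2
      _ ≤ compApp n F (tt1 n x j) (j+1) := hcmp' hba
      _ = compApp n F (tt1 n x j) j := l1.symm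
      _ = DD n F x (j+1) := e1

theorem DD_zero {X : Type*} [LinearOrder X] {n : ℕ} (hn : 3 ≤ n)
    {F : (Fin n → X) → X} (hA : NAssoc n F) (hI : Idem n F) (hM : Nondecr n F)
    (x : ℕ → X) : ∀ j, j ≤ n - 2 → DD n F x j = DD n F x 0 := by
  intro j
  induction j with
  | zero => intro _; rfl
  | succ j ih =>
    intro hj
    rw [← DD_adjacent hn hA hI hM x j (by omega)]
    exact ih (by omega)

end AuxStmt7

theorem stmt7 {X : Type*} [LinearOrder X] (n : ℕ) (hn : 3 ≤ n)
    (F : (Fin n → X) → X) (hA : NAssoc n F) (hI : Idem n F) (hM : Nondecr n F)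
    (H : (Fin (n - 1) → X) → X)
    (hH : ∀ y : ℕ → X, H (fun j => y (j : ℕ)) =
      F (fun j => if (j : ℕ) = 0 then y 0 else y ((j : ℕ) - 1))) :
    NAssoc (n - 1) H ∧ Idem (n - 1) H ∧ Nondecr (n - 1) H := by
  constructor
  · -- (n-1)-associativity
    have hH' : ∀ y : ℕ → X, H (fun j : Fin (n-1) => y (j : ℕ)) = DD n F y 0 := by
      intro y
      rw [hH y]
      refine congrArg F (funext fun k => ?_)
      simp only [dbl]
      split_ifs <;> first | rfl | omega | exact congrArg y (by omega)
    intro x i hi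
    have key : ∀ i : ℕ, i + 3 ≤ n →
        compApp (n-1) H x (i+1) = compApp (n-1) H x i := by
      intro i hstep
      have hGi : innerApp (n-1) H x i = DD n F (fun t => x (i + t)) 0 :=
        hH' (fun t => x (i + t))
      have hGi1 : innerApp (n-1) H x (i+1) = DD n F (fun t => x (i + 1 + t)) 0 :=
        hH' (fun t => x (i + 1 + t))
      have f3 : innerApp n F (yy n x i) i = innerApp (n-1) H x i := by
        rw [hGi]
        unfold innerApp DD
        refine congrArg F (funext fun k => ?_)
        have hk := k.isLt
        simp only [yy, dbl]
        split_ifs <;> first | rfl | omega | exact congrArg x (by omega)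
      have g1 : innerApp n F (yy n x i) (i+2) = innerApp (n-1) H x (i+1) := by
        rw [hGi1, ← DD_zero hn hA hI hM (fun t => x (i + 1 + t)) (n-2) (le_refl _)]
        unfold innerApp DD
        refine congrArg F (funext fun k => ?_)
        have hk := k.isLt
        simp only [yy, dbl]
        split_ifs <;> first | rfl | omega | exact congrArg x (by omega)
      have f4 : compApp n F (yy n x i) i = DD n F (zz n (n-1) H x i) (i+1) := by
        unfold compApp DD
        simp only [f3]
        refine congrArg F (funext fun p => ?_)
        have hp := p.isLt
        simp only [yy, dbl, zz]
        split_ifs <;> first | rfl | omega | exact congrArg x (by omega)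
      have f5 : compApp n F (yy n x i) (i+2) = DD n F (zz n (n-1) H x (i+1)) i := by
        unfold compApp DD
        simp only [g1]
        refine congrArg F (funext fun p => ?_)
        have hp := p.isLt
        simp only [yy, dbl, zz]
        split_ifs <;> first | rfl | omega | exact congrArg x (by omega)
      have f6 : compApp (n-1) H x i = DD n F (zz n (n-1) H x i) 0 := by
        refine Eq.trans ?_ (hH' (zz n (n-1) H x i))
        unfold compApp
        refine congrArg H (funext fun j => ?_)
        have hj := j.isLt
        simp only [zz]
        split_ifs <;> first | rfl | omega | exact congrArg x (by omega)
      have f7 : compApp (n-1) H x (i+1) = DD n F (zz n (n-1) H x (i+1)) 0 := by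
        refine Eq.trans ?_ (hH' (zz n (n-1) H x (i+1)))
        unfold compApp
        refine congrArg H (funext fun j => ?_)
        have hj := j.isLt
        simp only [zz]
        split_ifs <;> first | rfl | omega | exact congrArg x (by omega)
      calc compApp (n-1) H x (i+1)
          = DD n F (zz n (n-1) H x (i+1)) 0 := f7
        _ = DD n F (zz n (n-1) H x (i+1)) i :=
            (DD_zero hn hA hI hM _ i (by omega)).symm
        _ = compApp n F (yy n x i) (i+2) := f5.symm
        _ = compApp n F (yy n x i) i :=
            (hA _ (i+2) (by omega)).trans (hA _ i (by omega)).symm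
        _ = DD n F (zz n (n-1) H x i) (i+1) := f4
        _ = DD n F (zz n (n-1) H x i) 0 := DD_zero hn hA hI hM _ (i+1) (by omega)
        _ = compApp (n-1) H x i := f6.symm
    clear hH' hH
    induction i with
    | zero => rfl
    | succ i ih =>
      rw [key i (by omega)]
      exact ih (by omega)
  constructor
  · -- idempotency
    intro a
    have h := hH (fun _ => a)
    simp only [ite_self] at h
    exact h.trans (hI a)
  · -- nondecreasing
    intro x y hxy
    have hpos : 0 < n - 1 := by omega
    set x' : ℕ → X := fun k => if h : k < n - 1 then x ⟨k, h⟩ else x ⟨0, hpos⟩ with hx'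
    set y' : ℕ → X := fun k => if h : k < n - 1 then y ⟨k, h⟩ else y ⟨0, hpos⟩ with hy'
    have hxx : (fun j : Fin (n-1) => x' (j : ℕ)) = x := by
      refine funext fun j => ?_
      simp only [hx', dif_pos j.isLt]
    have hyy : (fun j : Fin (n-1) => y' (j : ℕ)) = y := by
      refine funext fun j => ?_
      simp only [hy', dif_pos j.isLt]
    have hle : ∀ m : ℕ, m < n - 1 → x' m ≤ y' m := by
      intro m hm
      simp only [hx', hy', dif_pos hm]
      exact hxy _
    rw [← hxx, ← hyy, hH x', hH y']
    refine hM _ _ fun k => ?_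
    have hk := k.isLt
    split_ifs
    · exact hle 0 (by omega)
    · exact hle _ (by omega)
end

section
/- Let X be a totally ordered set and F : X^n → X (n ≥ 2) an n-associative, idempotent, nondecreasing function. Then there exists a binary function G : X^2 → X, associative, idempotent and nondecreasing, such that F(x_1,...,x_n) = x_1 ∘ x_2 ∘ ... ∘ x_n where x ∘ y = G(x,y); moreover G(a,c) = F(a,(n-1)·c) = F((n-1)·a,c). -/
section Aux
variable {X : Type*}

/-- `F` applied to the first `n` entries of a sequence. -/
def Fapp (n : ℕ) (F : (Fin n → X) → X) (x : ℕ → X) : X := F (fun j => x (j : ℕ))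

/-- The binary operation `G a c = F (a, c, ..., c)`. -/
def G0 (n : ℕ) (F : (Fin n → X) → X) (a c : X) : X :=
  F (fun j => if (j : ℕ) = 0 then a else c)

theorem fapp_congr {n : ℕ} {F : (Fin n → X) → X} {x y : ℕ → X}
    (h : ∀ t, t < n → x t = y t) : Fapp n F x = Fapp n F y := by
  unfold Fapp; congr 1; funext j; exact h j j.isLt

theorem fapp_const {n : ℕ} {F : (Fin n → X) → X} (hI : Idem n F) {x : ℕ → X} {a : X}
    (h : ∀ t, t < n → x t = a) : Fapp n F x = a := by
  have h2 : Fapp n F x = Fapp n F (fun _ => a) := fapp_congr h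
  rw [h2]; exact hI a

theorem fapp_mono [Preorder X] {n : ℕ} {F : (Fin n → X) → X} (hM : Nondecr n F)
    {x y : ℕ → X} (h : ∀ t, t < n → x t ≤ y t) : Fapp n F x ≤ Fapp n F y :=
  hM _ _ fun j => h j j.isLt

theorem G0_eq (n : ℕ) (F : (Fin n → X) → X) (a c : X) :
    G0 n F a c = Fapp n F (fun t => if t = 0 then a else c) := rfl

theorem compApp_def (n : ℕ) (F : (Fin n → X) → X) (x : ℕ → X) (i : ℕ) :
    compApp n F x i = Fapp n F (fun t => if t < i then x t
      else if t = i then Fapp n F (fun u => x (i + u)) else x (t + n - 1)) := rfl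

end Aux

section Key
variable {X : Type*} [LinearOrder X] {n : ℕ} {F : (Fin n → X) → X}

theorem GA (hn : 2 ≤ n) (hA : NAssoc n F) (hI : Idem n F) (hM : Nondecr n F) (a c : X) :
    G0 n F a c = Fapp n F (fun t => if t = n - 1 then c else a) := by
  rw [G0_eq]
  set u := Fapp n F (fun t => if t = n - 1 then c else a) with hu
  set v := Fapp n F (fun t => if t = 0 then a else c) with hv
  -- u = F(u, c^{n-1})
  have ufix : Fapp n F (fun t => if t = 0 then u else c) = u := by
    have h := hA (fun t => if t < n - 1 then a else c) (n - 1) le_rfl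
    rw [compApp_def, compApp_def] at h
    have h1 : Fapp n F (fun t' => if (n - 1) + t' < n - 1 then a else c) = c :=
      fapp_const hI (by intro t ht; rw [if_neg (by omega)])
    have h2 : Fapp n F (fun t' => if (0 : ℕ) + t' < n - 1 then a else c) = u := by
      rw [hu]; exact fapp_congr (by intro t ht; split_ifs <;> first | rfl | omega)
    rw [h1, h2] at h
    calc Fapp n F (fun t => if t = 0 then u else c)
        = Fapp n F fun t => if t < 0 then (if t < n - 1 then a else c)
            else if t = 0 then u else (if t + n - 1 < n - 1 then a else c) := by
          exact fapp_congr (by intro t ht; split_ifs <;> first | rfl | omega)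
      _ = Fapp n F fun t => if t < n - 1 then (if t < n - 1 then a else c)
            else if t = n - 1 then c else (if t + n - 1 < n - 1 then a else c) := h.symm
      _ = u := by rw [hu]; exact fapp_congr (by intro t ht; split_ifs <;> first | rfl | omega)
  -- v = F(a^{n-1}, v)
  have vfix : Fapp n F (fun t => if t = n - 1 then v else a) = v := by
    have h := hA (fun t => if t < n then a else c) (n - 1) le_rfl
    rw [compApp_def, compApp_def] at h
    have h1 : Fapp n F (fun t' => if (n - 1) + t' < n then a else c) = v := by
      rw [hv]; exact fapp_congr (by intro t ht; split_ifs <;> first | rfl | omega)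
    have h2 : Fapp n F (fun t' => if (0 : ℕ) + t' < n then a else c) = a :=
      fapp_const hI (by intro t ht; rw [if_pos (by omega)])
    rw [h1, h2] at h
    calc Fapp n F (fun t => if t = n - 1 then v else a)
        = Fapp n F fun t => if t < n - 1 then (if t < n then a else c)
            else if t = n - 1 then v else (if t + n - 1 < n then a else c) := by
          exact fapp_congr (by intro t ht; split_ifs <;> first | rfl | omega)
      _ = Fapp n F fun t => if t < 0 then (if t < n then a else c)
            else if t = 0 then a else (if t + n - 1 < n then a else c) := h
      _ = v := by rw [hv]; exact fapp_congr (by intro t ht; split_ifs <;> first | rfl | omega)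
  rcases le_total a c with hac | hca
  · -- a ≤ c : u ≤ v pointwise, and v ≤ u via ufix
    have hau : a ≤ u := by
      rw [hu]
      calc a = Fapp n F (fun _ => a) := (fapp_const hI (fun _ _ => rfl)).symm
        _ ≤ _ := fapp_mono hM (by intro t ht; split_ifs <;> simp [hac])
    have h1 : u ≤ v := by
      rw [hu, hv]; exact fapp_mono hM (by intro t ht; split_ifs <;> first | rfl | omega | exact hac)
    have h2 : v ≤ u := by
      calc v ≤ Fapp n F (fun t => if t = 0 then u else c) := by
            rw [hv]; exact fapp_mono hM (by intro t ht; split_ifs <;> first | rfl | exact hau)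
        _ = u := ufix
    exact le_antisymm h2 h1
  · have hcv : c ≤ v := by
      rw [hv]
      calc c = Fapp n F (fun _ => c) := (fapp_const hI (fun _ _ => rfl)).symm
        _ ≤ _ := fapp_mono hM (by intro t ht; split_ifs <;> simp [hca])
    have h1 : v ≤ u := by
      rw [hu, hv]; exact fapp_mono hM (by intro t ht; split_ifs <;> first | rfl | omega | exact hca)
    have h2 : u ≤ v := by
      calc u ≤ Fapp n F (fun t => if t = n - 1 then v else a) := by
            rw [hu]; exact fapp_mono hM (by intro t ht; split_ifs <;> first | rfl | exact hcv)
        _ = v := vfix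
    exact le_antisymm h1 h2

theorem G0_assoc (hn : 2 ≤ n) (hA : NAssoc n F) (hI : Idem n F) (hM : Nondecr n F)
    (a b c : X) : G0 n F (G0 n F a b) c = G0 n F a (G0 n F b c) := by
  have h := hA (fun t => if t < n - 1 then a else if t = n - 1 then b else c) (n - 1) le_rfl
  rw [compApp_def, compApp_def] at h
  have h1 : Fapp n F (fun t' => if (n - 1) + t' < n - 1 then a
      else if (n - 1) + t' = n - 1 then b else c) = G0 n F b c := by
    rw [G0_eq]; exact fapp_congr (by intro t ht; split_ifs <;> first | rfl | omega)
  have h2 : Fapp n F (fun t' => if (0 : ℕ) + t' < n - 1 then a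
      else if (0 : ℕ) + t' = n - 1 then b else c) = G0 n F a b := by
    rw [GA hn hA hI hM a b]; exact fapp_congr (by intro t ht; split_ifs <;> first | rfl | omega)
  rw [h1, h2] at h
  calc G0 n F (G0 n F a b) c
      = Fapp n F fun t => if t < 0 then (if t < n - 1 then a else if t = n - 1 then b else c)
          else if t = 0 then G0 n F a b
          else (if t + n - 1 < n - 1 then a else if t + n - 1 = n - 1 then b else c) := by
        rw [G0_eq]; exact fapp_congr (by intro t ht; split_ifs <;> first | rfl | omega)
    _ = Fapp n F fun t => if t < n - 1 then (if t < n - 1 then a else if t = n - 1 then b else c)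
          else if t = n - 1 then G0 n F b c
          else (if t + n - 1 < n - 1 then a else if t + n - 1 = n - 1 then b else c) := h.symm
    _ = G0 n F a (G0 n F b c) := by
        rw [GA hn hA hI hM a (G0 n F b c)]
        exact fapp_congr (by intro t ht; split_ifs <;> first | rfl | omega)

theorem G0_idem (hI : Idem n F) (a : X) : G0 n F a a = a := by
  rw [G0_eq]; exact fapp_const hI (by intro t ht; split_ifs <;> rfl)

/-- Replace the entry at position `j+1` by `G (x j) (x (j+1))`. -/
theorem star (hn : 2 ≤ n) (hA : NAssoc n F) (hI : Idem n F) (hM : Nondecr n F)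
    (x : ℕ → X) (j : ℕ) (hj : j + 1 ≤ n - 1) :
    Fapp n F x = Fapp n F (fun t => if t = j + 1 then G0 n F (x j) (x (j + 1)) else x t) := by
  set s : ℕ → X := fun t => if t ≤ j then x t else if t < j + n then x j else x (t - n + 1)
    with hs
  have h := (hA s j (by omega)).trans (hA s (j + 1) hj).symm
  rw [compApp_def, compApp_def] at h
  have h1 : Fapp n F (fun t' => s (j + t')) = x j :=
    fapp_const hI (by intro t ht; simp only [hs]; split_ifs <;> first | rfl | (exact congrArg x (by omega)) | omega)
  have h2 : Fapp n F (fun t' => s (j + 1 + t')) = G0 n F (x j) (x (j + 1)) := by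
    rw [GA hn hA hI hM]
    exact fapp_congr (by
      intro t ht; simp only [hs]; split_ifs <;> first | rfl | (exact congrArg x (by omega)) | omega)
  rw [h1, h2] at h
  calc Fapp n F x
      = Fapp n F (fun t => if t < j then s t else if t = j then x j else s (t + n - 1)) := by
        exact fapp_congr (by
          intro t ht; simp only [hs]; split_ifs <;> first | rfl | (exact congrArg x (by omega)) | omega)
    _ = Fapp n F (fun t => if t < j + 1 then s t
          else if t = j + 1 then G0 n F (x j) (x (j + 1)) else s (t + n - 1)) := h
    _ = Fapp n F (fun t => if t = j + 1 then G0 n F (x j) (x (j + 1)) else x t) := by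
        exact fapp_congr (by
          intro t ht; simp only [hs]; split_ifs <;> first | rfl | (exact congrArg x (by omega)) | omega)

/-- Replace the entry at position `j` by `G (x j) (x (j+1))`. -/
theorem sstar (hn : 2 ≤ n) (hA : NAssoc n F) (hI : Idem n F) (hM : Nondecr n F)
    (x : ℕ → X) (j : ℕ) (hj : j + 1 ≤ n - 1) :
    Fapp n F x = Fapp n F (fun t => if t = j then G0 n F (x j) (x (j + 1)) else x t) := by
  set s : ℕ → X := fun t => if t ≤ j then x t else if t < j + n then x (j + 1) else x (t - n + 1)
    with hs
  have h := (hA s (j + 1) hj).trans (hA s j (by omega)).symm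
  rw [compApp_def, compApp_def] at h
  have h1 : Fapp n F (fun t' => s (j + 1 + t')) = x (j + 1) :=
    fapp_const hI (by intro t ht; simp only [hs]; split_ifs <;> first | rfl | (exact congrArg x (by omega)) | omega)
  have h2 : Fapp n F (fun t' => s (j + t')) = G0 n F (x j) (x (j + 1)) := by
    rw [G0_eq]
    exact fapp_congr (by
      intro t ht; simp only [hs]; split_ifs <;> first | rfl | (exact congrArg x (by omega)) | omega)
  rw [h1, h2] at h
  calc Fapp n F x
      = Fapp n F (fun t => if t < j + 1 then s t else if t = j + 1 then x (j + 1)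
          else s (t + n - 1)) := by
        exact fapp_congr (by
          intro t ht; simp only [hs]; split_ifs <;> first | rfl | (exact congrArg x (by omega)) | omega)
    _ = Fapp n F (fun t => if t < j then s t
          else if t = j then G0 n F (x j) (x (j + 1)) else s (t + n - 1)) := h
    _ = Fapp n F (fun t => if t = j then G0 n F (x j) (x (j + 1)) else x t) := by
        exact fapp_congr (by
          intro t ht; simp only [hs]; split_ifs <;> first | rfl | (exact congrArg x (by omega)) | omega)

end Key

section Main
variable {X : Type*} [LinearOrder X] {n : ℕ} {F : (Fin n → X) → X}

theorem G0_absorb (hn : 2 ≤ n) (hA : NAssoc n F) (hI : Idem n F) (hM : Nondecr n F)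
    (p q : X) : G0 n F p (G0 n F p q) = G0 n F p q := by
  rw [← G0_assoc hn hA hI hM, G0_idem hI]

theorem derived (hn : 2 ≤ n) (hA : NAssoc n F) (hI : Idem n F) (hM : Nondecr n F) :
    DerivedFrom n F (G0 n F) := by
  intro x
  show Fapp n F x = iterComp (G0 n F) x (n - 1)
  set G := G0 n F with hG
  have main : ∀ k, k ≤ n - 1 →
      Fapp n F x = Fapp n F (fun t => if t < k + 1 then iterComp G x k else x t) := by
    intro k
    induction k with
    | zero =>
      intro _
      exact fapp_congr (by
        intro t ht
        rcases Nat.eq_zero_or_pos t with h0 | h0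
        · subst h0; simp [iterComp]
        · rw [if_neg (by omega)])
    | succ k ih =>
      intro hk
      have ihh := ih (by omega)
      set z := iterComp G x k with hz
      set z' := iterComp G x (k + 1) with hz'
      have hzz : z' = G z (x (k + 1)) := rfl
      -- step 1 : star at j = k
      have step1 := star hn hA hI hM (fun t => if t < k + 1 then z else x t) k hk
      -- tuples with a block of z' at the end
      set w : ℕ → ℕ → X := fun i t => if t < i then z else if t < k + 2 then z' else x t
        with hw
      have e1 : Fapp n F (fun t => if t = k + 1 then
          G0 n F ((fun t => if t < k + 1 then z else x t) k)
            ((fun t => if t < k + 1 then z else x t) (k + 1)) else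
          (fun t => if t < k + 1 then z else x t) t) = Fapp n F (w (k + 1)) := by
        refine fapp_congr ?_
        intro t ht
        simp only [hw]
        by_cases h1 : t = k + 1
        · rw [if_pos h1, if_pos (by omega : k < k + 1), if_neg (by omega : ¬ k + 1 < k + 1),
            if_neg (by omega : ¬ t < k + 1), if_pos (by omega : t < k + 2), hzz]
        · rw [if_neg h1]
          by_cases h2 : t < k + 1
          · rw [if_pos h2, if_pos (by omega : t < k + 1)]
          · rw [if_neg h2, if_neg (by omega : ¬ t < k + 1), if_neg (by omega : ¬ t < k + 2)]
      -- downward pass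
      have down : ∀ d, d ≤ k + 1 → Fapp n F (w (k + 1)) = Fapp n F (w (k + 1 - d)) := by
        intro d
        induction d with
        | zero => intro _; rfl
        | succ d ihd =>
          intro hd
          have ihd' := ihd (by omega)
          have hstep := sstar hn hA hI hM (w (k + 1 - d)) (k - d) (by omega)
          rw [ihd', hstep]
          refine fapp_congr ?_
          intro t ht
          simp only [hw]
          have hj1 : (if k - d < k + 1 - d then z else if k - d < k + 2 then z' else x (k - d))
              = z := if_pos (by omega)
          have hj2 : (if k - d + 1 < k + 1 - d then z
              else if k - d + 1 < k + 2 then z' else x (k - d + 1)) = z' := by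
            rw [if_neg (by omega), if_pos (by omega)]
          rw [hj1, hj2]
          by_cases h1 : t = k - d
          · rw [if_pos h1, if_neg (by omega : ¬ t < k + 1 - (d + 1)), if_pos (by omega), hzz,
              G0_absorb hn hA hI hM]
          · rw [if_neg h1]
            by_cases h2 : t < k + 1 - (d + 1)
            · rw [if_pos h2, if_pos (by omega : t < k + 1 - d)]
            · rw [if_neg h2, if_neg (by omega : ¬ t < k + 1 - d)]
      have last := down (k + 1) le_rfl
      rw [ihh, step1, e1, last]
      refine fapp_congr ?_
      intro t ht
      simp only [hw]
      rw [if_neg (by omega : ¬ t < k + 1 - (k + 1))]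
  have fin := main (n - 1) le_rfl
  rw [fin]
  exact fapp_const hI (by intro t ht; rw [if_pos (by omega)])

end Main
theorem stmt8 {X : Type*} [LinearOrder X] (n : ℕ) (hn : 2 ≤ n)
    (F : (Fin n → X) → X) (hA : NAssoc n F) (hI : Idem n F) (hM : Nondecr n F) :
    ∃ G : X → X → X,
      (∀ a b c, G (G a b) c = G a (G b c)) ∧
      (∀ a, G a a = a) ∧
      (∀ a b a' b', a ≤ a' → b ≤ b' → G a b ≤ G a' b') ∧
      DerivedFrom n F G ∧
      (∀ a c, G a c = F (fun j => if (j : ℕ) = 0 then a else c) ∧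
              G a c = F (fun j => if (j : ℕ) = n - 1 then c else a)) := by
  refine ⟨G0 n F, G0_assoc hn hA hI hM, G0_idem hI, ?_, derived hn hA hI hM, ?_⟩
  · intro a b a' b' ha hb
    rw [G0_eq, G0_eq]
    exact fapp_mono hM (by intro t ht; split_ifs <;> assumption)
  · intro a c
    exact ⟨rfl, GA hn hA hI hM a c⟩
end

section
/- Let X be a totally ordered set and F : X^n → X an n-associative, quasitrivial, nondecreasing function. Then F is reducible, i.e., derived from an associative binary function G : X^2 → X. -/
set_option linter.unusedSectionVars false
set_option linter.unusedVariables false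

section St12Aux

variable {X : Type*} [LinearOrder X]

/-- The candidate binary reduction: `a ∘ b = F (a, b, b, ..., b)`. -/
def st12op (n : ℕ) (F : (Fin n → X) → X) (a b : X) : X :=
  F (fun j => if (j : ℕ) = 0 then a else b)

theorem st12_idem {n : ℕ} {F : (Fin n → X) → X} (hQ : Quasitrivial n F) (a : X) :
    F (fun _ => a) = a := by
  obtain ⟨j, hj⟩ := hQ (fun _ => a); exact hj

theorem st12_assocEq {n : ℕ} {F : (Fin n → X) → X} (hA : NAssoc n F) (x : ℕ → X)
    (i j : ℕ) (hi : i ≤ n - 1) (hj : j ≤ n - 1) :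
    compApp n F x i = compApp n F x j :=
  (hA x i hi).trans (hA x j hj).symm

theorem st12_innerApp_eq {n : ℕ} (F : (Fin n → X) → X) (x : ℕ → X) (i : ℕ) (g : Fin n → X)
    (hg : ∀ k : Fin n, x (i + (k : ℕ)) = g k) : innerApp n F x i = F g :=
  congrArg F (funext hg)

theorem st12_compApp_eq {n : ℕ} (F : (Fin n → X) → X) (x : ℕ → X) (i : ℕ) (v : X)
    (hin : innerApp n F x i = v) (g : Fin n → X)
    (hg : ∀ j : Fin n,
      (if (j : ℕ) < i then x (j : ℕ) else if (j : ℕ) = i then v else x ((j : ℕ) + n - 1)) = g j) :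
    compApp n F x i = F g := by
  unfold compApp
  simp only [hin]
  exact congrArg F (funext fun j => by exact hg j)

/-- `F(z₁,…,z_{n-1},z_{n-1})` absorbs `z_{n-1}` on the right for `∘`. -/
theorem st12_B1 {n : ℕ} (hn : 2 ≤ n) {F : (Fin n → X) → X}
    (hA : NAssoc n F) (hQ : Quasitrivial n F) (z : ℕ → X) :
    st12op n F (F (fun j : Fin n => z (min ((j:ℕ)+1) (n-1)))) (z (n-1))
      = F (fun j : Fin n => z (min ((j:ℕ)+1) (n-1))) := by
  have hin0 : innerApp n F (fun m => z (min (m+1) (n-1))) 0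
      = F (fun j : Fin n => z (min ((j:ℕ)+1) (n-1))) := by
    refine st12_innerApp_eq F _ 0 _ fun k => ?_
    have hk := k.isLt
    exact congrArg z (by omega)
  have hin1 : innerApp n F (fun m => z (min (m+1) (n-1))) (n-1) = z (n-1) := by
    have h1 : innerApp n F (fun m => z (min (m+1) (n-1))) (n-1)
        = F (fun _ : Fin n => z (n-1)) := by
      refine st12_innerApp_eq F _ (n-1) _ fun k => ?_
      have hk := k.isLt
      exact congrArg z (by omega)
    exact h1.trans (st12_idem hQ _)
  have h0 : compApp n F (fun m => z (min (m+1) (n-1))) 0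
      = F (fun j : Fin n => if (j:ℕ) = 0
            then F (fun j : Fin n => z (min ((j:ℕ)+1) (n-1))) else z (n-1)) := by
    refine st12_compApp_eq F _ 0 _ hin0 _ fun j => ?_
    have hj := j.isLt
    split_ifs <;> first | rfl | (exfalso; omega) | (exact congrArg z (by omega))
  have h1 : compApp n F (fun m => z (min (m+1) (n-1))) (n-1)
      = F (fun j : Fin n => z (min ((j:ℕ)+1) (n-1))) := by
    refine st12_compApp_eq F _ (n-1) _ hin1 _ fun j => ?_
    have hj := j.isLt
    split_ifs <;> first | rfl | (exfalso; omega) | (exact congrArg z (by omega))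
  exact h0.symm.trans ((st12_assocEq hA _ 0 (n-1) (by omega) le_rfl).trans h1)

/-- Monotone squeeze: if `c ∘ y = c` then `F(c,c,y,…,y) = c`. -/
theorem st12_F2 {n : ℕ} (hn : 2 ≤ n) {F : (Fin n → X) → X}
    (hQ : Quasitrivial n F) (hM : Nondecr n F) {c y : X}
    (h : st12op n F c y = c) :
    F (fun j : Fin n => if (j:ℕ) ≤ 1 then c else y) = c := by
  rcases le_total c y with hcy | hyc
  · refine le_antisymm ?_ ?_
    · refine le_trans (hM (fun j : Fin n => if (j:ℕ) ≤ 1 then c else y)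
        (fun j : Fin n => if (j:ℕ) = 0 then c else y) fun j => ?_) (le_of_eq h)
      have hj := j.isLt
      try beta_reduce
      split_ifs <;> first | exact le_rfl | exact hcy | (exfalso; omega)
    · have h2 : F (fun _ : Fin n => c) ≤ F (fun j : Fin n => if (j:ℕ) ≤ 1 then c else y) := by
        refine hM _ _ fun j => ?_
        try beta_reduce
        split_ifs <;> first | exact le_rfl | exact hcy
      rwa [st12_idem hQ c] at h2
  · refine le_antisymm ?_ ?_
    · have h2 : F (fun j : Fin n => if (j:ℕ) ≤ 1 then c else y) ≤ F (fun _ : Fin n => c) := by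
        refine hM _ _ fun j => ?_
        try beta_reduce
        split_ifs <;> first | exact le_rfl | exact hyc
      rwa [st12_idem hQ c] at h2
    · refine le_trans (le_of_eq h.symm) (hM (fun j : Fin n => if (j:ℕ) = 0 then c else y)
        (fun j : Fin n => if (j:ℕ) ≤ 1 then c else y) fun j => ?_)
      have hj := j.isLt
      try beta_reduce
      split_ifs <;> first | exact le_rfl | exact hyc | (exfalso; omega)

/-- Key lemma: `F(z₀,…,z_{n-1}) = z₀ ∘ F(z₁,…,z_{n-1},z_{n-1})`. -/
theorem st12_lemB {n : ℕ} (hn : 2 ≤ n) {F : (Fin n → X) → X}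
    (hA : NAssoc n F) (hQ : Quasitrivial n F) (hM : Nondecr n F) (z : ℕ → X) :
    F (fun j : Fin n => z (j:ℕ))
      = st12op n F (z 0) (F (fun j : Fin n => z (min ((j:ℕ)+1) (n-1)))) := by
  obtain ⟨C, hC⟩ : ∃ C, F (fun j : Fin n => z (min ((j:ℕ)+1) (n-1))) = C := ⟨_, rfl⟩
  rw [hC]
  have hcy : st12op n F C (z (n-1)) = C := by rw [← hC]; exact st12_B1 hn hA hQ z
  have hcc : F (fun j : Fin n => if (j:ℕ) ≤ 1 then C else z (n-1)) = C :=
    st12_F2 hn hQ hM hcy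
  have hB2 : F (fun j : Fin n => z (j:ℕ))
      = F (fun j : Fin n => if (j:ℕ) = 0 then z 0 else if (j:ℕ) ≤ 1 then C else z (n-1)) := by
    have hinA : innerApp n F (fun m => z (min m (n-1))) (n-1) = z (n-1) := by
      have h1 : innerApp n F (fun m => z (min m (n-1))) (n-1)
          = F (fun _ : Fin n => z (n-1)) := by
        refine st12_innerApp_eq F _ (n-1) _ fun k => ?_
        have hk := k.isLt
        exact congrArg z (by omega)
      exact h1.trans (st12_idem hQ _)
    have hinB : innerApp n F (fun m => z (min m (n-1))) 1 = C := by
      have h1 : innerApp n F (fun m => z (min m (n-1))) 1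
          = F (fun j : Fin n => z (min ((j:ℕ)+1) (n-1))) := by
        refine st12_innerApp_eq F _ 1 _ fun k => ?_
        have hk := k.isLt
        exact congrArg z (by omega)
      exact h1.trans hC
    have e1 : compApp n F (fun m => z (min m (n-1))) (n-1)
        = F (fun j : Fin n => z (j:ℕ)) := by
      refine st12_compApp_eq F _ (n-1) _ hinA _ fun j => ?_
      have hj := j.isLt
      split_ifs <;> first | (exact congrArg z (by omega)) | (exfalso; omega)
    have e2 : compApp n F (fun m => z (min m (n-1))) 1
        = F (fun j : Fin n => if (j:ℕ) = 0 then z 0 else if (j:ℕ) ≤ 1 then C else z (n-1)) := by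
      refine st12_compApp_eq F _ 1 _ hinB _ fun j => ?_
      have hj := j.isLt
      split_ifs <;> first | rfl | (exact congrArg z (by omega)) | (exfalso; omega)
    exact e1.symm.trans ((st12_assocEq hA _ (n-1) 1 le_rfl (by omega)).trans e2)
  have hB3 : ∀ k, 1 ≤ k → k ≤ n-2 →
      F (fun j : Fin n => if (j:ℕ) = 0 then z 0 else if (j:ℕ) ≤ k then C else z (n-1))
      = F (fun j : Fin n => if (j:ℕ) = 0 then z 0 else if (j:ℕ) ≤ k+1 then C else z (n-1)) := by
    intro k hk1 hk2
    have hinA : innerApp n F (fun m => if m = 0 then z 0 else if m ≤ k+1 then C else z (n-1)) k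
        = C := by
      have h1 : innerApp n F (fun m => if m = 0 then z 0 else if m ≤ k+1 then C else z (n-1)) k
          = F (fun kk : Fin n => if (kk:ℕ) ≤ 1 then C else z (n-1)) := by
        refine st12_innerApp_eq F _ k _ fun kk => ?_
        have hkk := kk.isLt
        try beta_reduce
        split_ifs <;> first | rfl | (exfalso; omega)
      exact h1.trans hcc
    have hinB : innerApp n F (fun m => if m = 0 then z 0 else if m ≤ k+1 then C else z (n-1))
        (k+1) = C := by
      have h1 : innerApp n F (fun m => if m = 0 then z 0 else if m ≤ k+1 then C else z (n-1))
          (k+1) = F (fun kk : Fin n => if (kk:ℕ) = 0 then C else z (n-1)) := by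
        refine st12_innerApp_eq F _ (k+1) _ fun kk => ?_
        have hkk := kk.isLt
        try beta_reduce
        split_ifs <;> first | rfl | (exfalso; omega)
      exact h1.trans hcy
    have e1 : compApp n F (fun m => if m = 0 then z 0 else if m ≤ k+1 then C else z (n-1)) k
        = F (fun j : Fin n => if (j:ℕ) = 0 then z 0 else if (j:ℕ) ≤ k then C else z (n-1)) := by
      refine st12_compApp_eq F _ k _ hinA _ fun j => ?_
      have hj := j.isLt
      try beta_reduce
      split_ifs <;> first | rfl | (exfalso; omega)
    have e2 : compApp n F (fun m => if m = 0 then z 0 else if m ≤ k+1 then C else z (n-1)) (k+1)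
        = F (fun j : Fin n => if (j:ℕ) = 0 then z 0 else if (j:ℕ) ≤ k+1 then C else z (n-1)) := by
      refine st12_compApp_eq F _ (k+1) _ hinB _ fun j => ?_
      have hj := j.isLt
      try beta_reduce
      split_ifs <;> first | rfl | (exfalso; omega)
    exact e1.symm.trans ((st12_assocEq hA _ k (k+1) (by omega) (by omega)).trans e2)
  have hchain : ∀ d k, 1 ≤ k → k + d = n-1 →
      F (fun j : Fin n => if (j:ℕ) = 0 then z 0 else if (j:ℕ) ≤ k then C else z (n-1))
      = F (fun j : Fin n => if (j:ℕ) = 0 then z 0 else if (j:ℕ) ≤ n-1 then C else z (n-1)) := by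
    intro d
    induction d with
    | zero => intro k hk1 hk2; rw [show k = n-1 from by omega]
    | succ d ih =>
      intro k hk1 hk2
      rw [hB3 k hk1 (by omega)]
      exact ih (k+1) (by omega) (by omega)
  have hend : F (fun j : Fin n => if (j:ℕ) = 0 then z 0 else if (j:ℕ) ≤ n-1 then C else z (n-1))
      = st12op n F (z 0) C := by
    show _ = F (fun j : Fin n => if (j:ℕ) = 0 then z 0 else C)
    refine congrArg F (funext fun j => ?_)
    have hj := j.isLt
    split_ifs <;> first | rfl | (exfalso; omega)
  rw [hB2, hchain (n-2) 1 le_rfl (by omega), hend]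

/-- Convenient applied form of the key lemma. -/
theorem st12_lemB_ap {n : ℕ} (hn : 2 ≤ n) {F : (Fin n → X) → X}
    (hA : NAssoc n F) (hQ : Quasitrivial n F) (hM : Nondecr n F) (z : ℕ → X)
    (g gin : Fin n → X) (c0 : X)
    (hg : ∀ j : Fin n, z (j:ℕ) = g j) (h0 : z 0 = c0)
    (hgin : ∀ j : Fin n, z (min ((j:ℕ)+1) (n-1)) = gin j) :
    F g = st12op n F c0 (F gin) := by
  have h := st12_lemB hn hA hQ hM z
  rw [show (fun j : Fin n => z (j:ℕ)) = g from funext hg, h0,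
      show (fun j : Fin n => z (min ((j:ℕ)+1) (n-1))) = gin from funext hgin] at h
  exact h

theorem st12_op_assoc {n : ℕ} (hn : 2 ≤ n) {F : (Fin n → X) → X}
    (hA : NAssoc n F) (hQ : Quasitrivial n F) (hM : Nondecr n F) (a b c : X) :
    st12op n F (st12op n F a b) c = st12op n F a (st12op n F b c) := by
  obtain ⟨D, hD⟩ : ∃ D, F (fun k : Fin n => if (k:ℕ) = n-1 then c else b) = D := ⟨_, rfl⟩
  have haux1 : st12op n F (st12op n F a b) c
      = F (fun j : Fin n => if (j:ℕ) = 0 then a else if (j:ℕ) = 1 then D else c) := by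
    have hinA : innerApp n F (fun m => if m = 0 then a else if m ≤ n-1 then b else c) 0
        = st12op n F a b := by
      refine st12_innerApp_eq F _ 0 (fun k : Fin n => if (k:ℕ) = 0 then a else b) fun k => ?_
      have hk := k.isLt
      try beta_reduce
      split_ifs <;> first | rfl | (exfalso; omega)
    have hinB : innerApp n F (fun m => if m = 0 then a else if m ≤ n-1 then b else c) 1
        = D := by
      have h1 : innerApp n F (fun m => if m = 0 then a else if m ≤ n-1 then b else c) 1
          = F (fun k : Fin n => if (k:ℕ) = n-1 then c else b) := by
        refine st12_innerApp_eq F _ 1 _ fun k => ?_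
        have hk := k.isLt
        try beta_reduce
        split_ifs <;> first | rfl | (exfalso; omega)
      exact h1.trans hD
    have e0 : compApp n F (fun m => if m = 0 then a else if m ≤ n-1 then b else c) 0
        = F (fun j : Fin n => if (j:ℕ) = 0 then st12op n F a b else c) := by
      refine st12_compApp_eq F _ 0 _ hinA _ fun j => ?_
      have hj := j.isLt
      try beta_reduce
      split_ifs <;> first | rfl | (exfalso; omega)
    have e1 : compApp n F (fun m => if m = 0 then a else if m ≤ n-1 then b else c) 1
        = F (fun j : Fin n => if (j:ℕ) = 0 then a else if (j:ℕ) = 1 then D else c) := by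
      refine st12_compApp_eq F _ 1 _ hinB _ fun j => ?_
      have hj := j.isLt
      try beta_reduce
      split_ifs <;> first | rfl | (exfalso; omega)
    exact e0.symm.trans ((st12_assocEq hA _ 0 1 (by omega) (by omega)).trans e1)
  rcases eq_or_lt_of_le hn with h2 | h3
  · -- n = 2
    have hn2 : n = 2 := h2.symm
    have hD2 : D = st12op n F b c := by
      rw [← hD]
      show _ = F (fun k : Fin n => if (k:ℕ) = 0 then b else c)
      refine congrArg F (funext fun k => ?_)
      have hk := k.isLt
      split_ifs <;> first | rfl | (exfalso; omega)
    rw [haux1, hD2]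
    show _ = F (fun j : Fin n => if (j:ℕ) = 0 then a else st12op n F b c)
    refine congrArg F (funext fun j => ?_)
    have hj := j.isLt
    split_ifs <;> first | rfl | (exfalso; omega)
  · -- 3 ≤ n
    obtain ⟨jq, hjq⟩ := hQ (fun k : Fin n => if (k:ℕ) = n-1 then c else b)
    rw [hD] at hjq
    by_cases hql : (jq:ℕ) = n-1
    · have hDc : D = c := by
        rw [hjq]
        try beta_reduce
        rw [if_pos hql]
      have hbc : st12op n F b c = c := by
        rcases le_total b c with hbc' | hcb
        · refine le_antisymm ?_ ?_
          · have h2 : F (fun j : Fin n => if (j:ℕ) = 0 then b else c) ≤ F (fun _ : Fin n => c) := by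
              refine hM _ _ fun j => ?_
              try beta_reduce
              split_ifs <;> first | exact le_rfl | exact hbc'
            rwa [st12_idem hQ c] at h2
          · refine le_trans (le_of_eq (hDc.symm.trans hD.symm)) (hM _ _ fun k => ?_)
            have hk := k.isLt
            try beta_reduce
            split_ifs <;> first | exact le_rfl | exact hbc' | (exfalso; omega)
        · refine le_antisymm ?_ ?_
          · refine le_trans (hM (fun j : Fin n => if (j:ℕ) = 0 then b else c)
              (fun k : Fin n => if (k:ℕ) = n-1 then c else b) fun k => ?_)
              (le_of_eq (hD.trans hDc))
            have hk := k.isLt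
            try beta_reduce
            split_ifs <;> first | exact le_rfl | exact hcb | (exfalso; omega)
          · have h2 : F (fun _ : Fin n => c) ≤ F (fun j : Fin n => if (j:ℕ) = 0 then b else c) := by
              refine hM _ _ fun j => ?_
              try beta_reduce
              split_ifs <;> first | exact le_rfl | exact hcb
            rwa [st12_idem hQ c] at h2
      rw [haux1, hDc, hbc]
      show _ = F (fun j : Fin n => if (j:ℕ) = 0 then a else c)
      refine congrArg F (funext fun j => ?_)
      have hj := j.isLt
      split_ifs <;> rfl
    · have hDb : D = b := by
        rw [hjq]
        try beta_reduce
        rw [if_neg hql]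
      have haux2 : F (fun j : Fin n => if (j:ℕ) = 0 then a else if (j:ℕ) = 1 then b else c)
          = st12op n F a (st12op n F b c) := by
        have hst : st12op n F b c = F (fun j : Fin n => if (j:ℕ) = 0 then b else c) := rfl
        rw [hst]
        refine st12_lemB_ap hn hA hQ hM (fun m => if m = 0 then a else if m = 1 then b else c)
          _ _ _ (fun j => rfl) rfl fun j => ?_
        have hj := j.isLt
        try beta_reduce
        split_ifs <;> first | rfl | (exfalso; omega)
      rw [haux1, hDb]
      exact haux2

end St12Aux

theorem stmt12 {X : Type*} [LinearOrder X] (n : ℕ) (hn : 2 ≤ n)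
    (F : (Fin n → X) → X) (hA : NAssoc n F) (hQ : Quasitrivial n F)
    (hM : Nondecr n F) :
    ∃ G : X → X → X, (∀ a b c, G (G a b) c = G a (G b c)) ∧ DerivedFrom n F G := by
  refine ⟨st12op n F, fun a b c => st12_op_assoc hn hA hQ hM a b c, ?_⟩
  intro x
  have hstep : ∀ k, k ≤ n-2 →
      F (fun j : Fin n => x (min (k + (j:ℕ)) (n-1)))
        = st12op n F (x k) (F (fun j : Fin n => x (min (k + 1 + (j:ℕ)) (n-1)))) := by
    intro k hk
    refine st12_lemB_ap hn hA hQ hM (fun m => x (min (k+m) (n-1))) _ _ _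
      (fun j => rfl) (congrArg x (by omega)) fun j => ?_
    have hj := j.isLt
    exact congrArg x (by omega)
  have hchain : ∀ d k, k + d + 1 = n - 1 →
      st12op n F (iterComp (st12op n F) x k)
          (F (fun j : Fin n => x (min (k + 1 + (j:ℕ)) (n-1))))
        = iterComp (st12op n F) x (n-1) := by
    intro d
    induction d with
    | zero =>
      intro k hk
      rw [show (fun j : Fin n => x (min (k + 1 + (j:ℕ)) (n-1))) = (fun _ : Fin n => x (n-1))
          from funext fun j => congrArg x (by omega)]
      rw [st12_idem hQ, show n - 1 = k + 1 from by omega]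
      rfl
    | succ d ih =>
      intro k hk
      rw [hstep (k+1) (by omega)]
      rw [← st12_op_assoc hn hA hQ hM]
      exact ih (k+1) (by omega)
  show F (fun j : Fin n => x ((j:ℕ))) = iterComp (st12op n F) x (n-1)
  rw [show (fun j : Fin n => x ((j:ℕ))) = (fun j : Fin n => x (min (0 + (j:ℕ)) (n-1)))
      from funext fun j => congrArg x (by have := j.isLt; omega)]
  rw [hstep 0 (by omega)]
  exact hchain (n-2) 0 (by omega)
end

section
/- Let X be a totally ordered set and F : X^2 → X an associative, idempotent, nondecreasing binary function having a neutral element e. Then F is quasitrivial: for all x,y ∈ X, F(x,y) ∈ {x,y}. Moreover, if x,y ≤ e then F(x,y) = min(x,y), and if x,y ≥ e then F(x,y) = max(x,y). -/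
theorem stmt13 {X : Type*} [LinearOrder X] (F : X → X → X)
    (hA : ∀ a b c, F (F a b) c = F a (F b c))
    (hI : ∀ x, F x x = x)
    (hM : ∀ a a' b b', a ≤ a' → b ≤ b' → F a b ≤ F a' b')
    (e : X) (he : ∀ x, F e x = x ∧ F x e = x) :
    (∀ x y, F x y = x ∨ F x y = y) ∧
    (∀ x y, x ≤ e → y ≤ e → F x y = min x y) ∧
    (∀ x y, e ≤ x → e ≤ y → F x y = max x y) := by
  have hmin : ∀ x y, x ≤ e → y ≤ e → F x y = min x y := by
    intro x y hx hy
    refine le_antisymm (le_min ?_ ?_) ?_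
    · calc F x y ≤ F x e := hM x x y e le_rfl hy
        _ = x := (he x).2
    · calc F x y ≤ F e y := hM x e y y hx le_rfl
        _ = y := (he y).1
    · calc min x y = F (min x y) (min x y) := (hI _).symm
        _ ≤ F x y := hM _ _ _ _ (min_le_left x y) (min_le_right x y)
  have hmax : ∀ x y, e ≤ x → e ≤ y → F x y = max x y := by
    intro x y hx hy
    refine le_antisymm ?_ (max_le ?_ ?_)
    · calc F x y ≤ F (max x y) (max x y) :=
          hM _ _ _ _ (le_max_left x y) (le_max_right x y)
        _ = max x y := hI _
    · calc x = F x e := ((he x).2).symm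
        _ ≤ F x y := hM x x e y le_rfl hy
    · calc y = F e y := ((he y).1).symm
        _ ≤ F x y := hM e x y y hx le_rfl
  refine ⟨?_, hmin, hmax⟩
  intro x y
  set a := F x y with ha
  have h1 : F x a = a := by rw [ha, ← hA, hI]
  have h2 : F a y = a := by rw [ha, hA, hI]
  have hlow : min x y ≤ a :=
    calc min x y = F (min x y) (min x y) := (hI _).symm
      _ ≤ F x y := hM _ _ _ _ (min_le_left x y) (min_le_right x y)
  rcases le_total a e with hae | hea
  · rcases le_total x e with hx | hx
    · -- a ≤ e, x ≤ e ⇒ a ≤ x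
      have hax : a ≤ x := by
        have := hmin x a hx hae
        rw [h1] at this
        exact min_eq_right_iff.mp this.symm
      rcases le_total y e with hy | hy
      · have hay : a ≤ y := by
          have := hmin a y hae hy
          rw [h2] at this
          exact min_eq_left_iff.mp this.symm
        have : a = min x y := le_antisymm (le_min hax hay) hlow
        rcases le_total x y with h | h
        · left; rw [this, min_eq_left h]
        · right; rw [this, min_eq_right h]
      · left
        have : x ≤ a := by
          calc x = F x e := ((he x).2).symm
            _ ≤ F x y := hM x x e y le_rfl hy
        exact le_antisymm hax this
    · -- a ≤ e ≤ x ⇒ y ≤ a ≤ e, use hmin a y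
      right
      have hya : y ≤ a := by
        calc y = F e y := ((he y).1).symm
          _ ≤ F x y := hM e x y y hx le_rfl
      have hay : a ≤ y := by
        have := hmin a y hae (hya.trans hae)
        rw [h2] at this
        exact min_eq_left_iff.mp this.symm
      exact le_antisymm hay hya
  · -- e ≤ a, dual
    have hhigh : a ≤ max x y :=
      calc F x y ≤ F (max x y) (max x y) :=
          hM _ _ _ _ (le_max_left x y) (le_max_right x y)
        _ = max x y := hI _
    rcases le_total e x with hx | hx
    · have hxa : x ≤ a := by
        have := hmax x a hx hea
        rw [h1] at this
        exact max_eq_right_iff.mp this.symm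
      rcases le_total e y with hy | hy
      · have hya : y ≤ a := by
          have := hmax a y hea hy
          rw [h2] at this
          exact max_eq_left_iff.mp this.symm
        have : a = max x y := le_antisymm hhigh (max_le hxa hya)
        rcases le_total x y with h | h
        · right; rw [this, max_eq_right h]
        · left; rw [this, max_eq_left h]
      · left
        have : a ≤ x := by
          calc F x y ≤ F x e := hM x x y e le_rfl hy
            _ = x := (he x).2
        exact le_antisymm this hxa
    · right
      have hay : a ≤ y := by
        calc F x y ≤ F e y := hM x e y y hx le_rfl
          _ = y := (he y).1
      have hya : y ≤ a := by
        have := hmax a y hea (hea.trans hay)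
        rw [h2] at this
        exact max_eq_left_iff.mp this.symm
      exact le_antisymm hay hya
end

section
/- Let X be a totally ordered Abelian group and g : X → X a monotone bijection. Then F : X^3 → X defined by F(x,y,z) = g^{-1}(g(x) - g(y) + g(z)) is 3-associative and idempotent, and each of its unary sections is monotone (order-preserving in the first and third variables, order-reversing in the second); however F is not nondecreasing (when X has at least two elements), and F is not reducible to a binary associative function. -/
theorem stmt16 {X : Type*} [AddCommGroup X] [LinearOrder X] [IsOrderedAddMonoid X] [Nontrivial X]
    (g : X ≃ X) (hg : Monotone g ∨ Antitone g)
    (F : X → X → X → X)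
    (hF : ∀ x y z, F x y z = g.symm (g x - g y + g z)) :
    (∀ a b c d e, F (F a b c) d e = F a (F b c d) e ∧
        F a (F b c d) e = F a b (F c d e)) ∧
    (∀ x, F x x x = x) ∧
    (∀ b c, Monotone (fun x => F x b c)) ∧
    (∀ a c, Antitone (fun y => F a y c)) ∧
    (∀ a b, Monotone (fun z => F a b z)) ∧
    ¬ (∀ a a' b b' c c', a ≤ a' → b ≤ b' → c ≤ c' → F a b c ≤ F a' b' c') ∧
    ¬ ∃ G : X → X → X, (∀ a b c, G (G a b) c = G a (G b c)) ∧
        ∀ x y z, F x y z = G (G x y) z := by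
  have hginj : Function.Injective g := g.injective
  have happ : ∀ t, g (g.symm t) = t := fun t => g.apply_symm_apply t
  have hcase : (StrictMono (⇑g) ∧ StrictMono (⇑g.symm)) ∨
      (StrictAnti (⇑g) ∧ StrictAnti (⇑g.symm)) := by
    rcases hg with hm | hm
    · left
      have h1 := hm.strictMono_of_injective hginj
      exact ⟨h1, fun u v h => h1.lt_iff_lt.mp (by simpa [happ] using h)⟩
    · right
      have h1 := hm.strictAnti_of_injective hginj
      exact ⟨h1, fun u v h => h1.lt_iff_gt.mp (by simpa [happ] using h)⟩
  refine ⟨?_, ?_, ?_, ?_, ?_, ?_, ?_⟩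
  · intro a b c d e
    constructor <;> · simp only [hF, happ]; congr 1; abel
  · intro x
    simp [hF]
  · intro b c x x' hxx'
    simp only [hF]
    rcases hcase with ⟨h1, h2⟩ | ⟨h1, h2⟩
    · have hx : g x ≤ g x' := h1.monotone hxx'
      exact h2.monotone (by gcongr)
    · have hx : g x' ≤ g x := h1.antitone hxx'
      exact h2.antitone (by gcongr)
  · intro a c y y' hyy'
    simp only [hF]
    rcases hcase with ⟨h1, h2⟩ | ⟨h1, h2⟩
    · have hy : g y ≤ g y' := h1.monotone hyy'
      exact h2.monotone (by gcongr)
    · have hy : g y' ≤ g y := h1.antitone hyy'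
      exact h2.antitone (by gcongr)
  · intro a b z z' hzz'
    simp only [hF]
    rcases hcase with ⟨h1, h2⟩ | ⟨h1, h2⟩
    · have hz : g z ≤ g z' := h1.monotone hzz'
      exact h2.monotone (by gcongr)
    · have hz : g z' ≤ g z := h1.antitone hzz'
      exact h2.antitone (by gcongr)
  · -- not nondecreasing
    intro h
    obtain ⟨p, q, hpq⟩ := exists_pair_ne X
    have aux1 : ∀ r s : X, g r < g s → ¬ (g r ≤ g r - g s + g r) := by
      intro r s hrs hle
      rw [sub_add_eq_add_sub, le_sub_iff_add_le, add_le_add_iff_left] at hle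
      exact absurd hle hrs.not_ge
    have aux2 : ∀ r s : X, g s < g r → ¬ (g r - g s + g r ≤ g r) := by
      intro r s hrs hle
      rw [sub_add_eq_add_sub, sub_le_iff_le_add, add_le_add_iff_left] at hle
      exact absurd hle hrs.not_ge
    rcases hcase with ⟨h1, h2⟩ | ⟨h1, h2⟩ <;> rcases hpq.lt_or_gt with hlt | hlt
    · have key := h p p p q p p le_rfl hlt.le le_rfl
      rw [hF, hF] at key
      have hk := h2.le_iff_le.mp key
      simp only [sub_self, zero_add] at hk
      exact aux1 p q (h1 hlt) hk
    · have key := h p p q p p p le_rfl hlt.le le_rfl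
      rw [hF, hF] at key
      have hk := h2.le_iff_le.mp key
      simp only [sub_self, zero_add] at hk
      exact aux2 p q (h1 hlt) hk
    · have key := h p p p q p p le_rfl hlt.le le_rfl
      rw [hF, hF] at key
      have hk := h2.le_iff_ge.mp key
      simp only [sub_self, zero_add] at hk
      exact aux2 p q (h1 hlt) hk
    · have key := h p p q p p p le_rfl hlt.le le_rfl
      rw [hF, hF] at key
      have hk := h2.le_iff_ge.mp key
      simp only [sub_self, zero_add] at hk
      exact aux1 p q (h1 hlt) hk
  · -- not reducible
    rintro ⟨G, hassoc, hred⟩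
    obtain ⟨p, q, hpq⟩ := exists_pair_ne X
    set u := G p p with hu
    have hright : ∀ x, G x u = x := by
      intro x
      have h1 : G x u = G (G x p) p := (hassoc x p p).symm
      have h2 : F x p p = G (G x p) p := hred x p p
      rw [hF] at h2
      simp at h2
      rw [h1, ← h2]
    have hGform : ∀ x y, G x y = g.symm (g x - g u + g y) := by
      intro x y
      have hxy : G x y = G (G x u) y := by rw [hright]
      rw [hxy, ← hred, hF]
    have heq : ∀ x y z, g x - g y + g z = g x - g u + g y - g u + g z := by
      intro x y z
      have h1 := hred x y z
      rw [hF, hGform (G x y) z, hGform x y, happ] at h1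
      exact g.symm.injective h1
    have h2gu : ∀ b : X, g u + g u = g b + g b := by
      intro b
      have hb := heq u b u
      have h' : g u - g b + g u = g b := by
        rw [hb]; abel
      calc g u + g u = g u - g b + g u + g b := by abel
        _ = g b + g b := by rw [h']
    have hppqq : g p + g p = g q + g q := (h2gu p).symm.trans (h2gu q)
    have : g p = g q := by
      rcases lt_trichotomy (g p) (g q) with h | h | h
      · exact absurd hppqq (add_lt_add h h).ne
      · exact h
      · exact absurd hppqq (add_lt_add h h).ne'
    exact hpq (hginj this)
end

section
/- Let X be a totally ordered set with at least two elements and let F : X^n → X be the projection onto the first coordinate, F(x_1,...,x_n) = x_1 (n ≥ 2). Then F is associative, idempotent, quasitrivial and nondecreasing, but F is not extremal: there is no G : X^2 → X such that F(x_1,...,x_n) always equals G(min_i x_i, max_i x_i) or always equals G(max_i x_i, min_i x_i). -/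
theorem stmt18 {X : Type*} [LinearOrder X] [Nontrivial X] (n : ℕ) (hn : 2 ≤ n)
    (F : (Fin n → X) → X) (hF : ∀ x, F x = x ⟨0, by omega⟩) :
    NAssoc n F ∧ Idem n F ∧ Quasitrivial n F ∧ Nondecr n F ∧
    ¬ ∃ G : X → X → X,
      (∀ x : Fin n → X,
        F x = G (Finset.univ.inf' ⟨⟨0, by omega⟩, Finset.mem_univ _⟩ x)
                (Finset.univ.sup' ⟨⟨0, by omega⟩, Finset.mem_univ _⟩ x)) ∨
      (∀ x : Fin n → X,
        F x = G (Finset.univ.sup' ⟨⟨0, by omega⟩, Finset.mem_univ _⟩ x)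
                (Finset.univ.inf' ⟨⟨0, by omega⟩, Finset.mem_univ _⟩ x)) := by

  obtain ⟨a, b, hab⟩ := exists_pair_lt X
  refine ⟨?_, ?_, ?_, ?_, ?_⟩
  · intro x i hi
    have c0 : ((⟨0, by omega⟩ : Fin n) : ℕ) = 0 := rfl
    rw [compApp, compApp, hF, hF]
    simp only [c0, innerApp, hF]
    rcases Nat.eq_zero_or_pos i with h | h
    · subst h; simp
    · simp [h]
  · intro a; rw [hF]
  · intro x; exact ⟨_, hF x⟩
  · intro x y h; rw [hF, hF]; exact h _
  · rintro ⟨G, hG | hG⟩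
    all_goals {
      have h1 := hG (fun j => if (j:ℕ) = 0 then a else b)
      have h2 := hG (fun j => if (j:ℕ) = 0 then b else a)
      rw [hF] at h1 h2
      have hi1 : (Finset.univ.inf' ⟨⟨0, by omega⟩, Finset.mem_univ _⟩
          (fun j : Fin n => if (j:ℕ) = 0 then a else b)) = a := by
        apply le_antisymm
        · exact (Finset.inf'_le _ (Finset.mem_univ (⟨0, by omega⟩ : Fin n))).trans_eq (by simp)
        · apply Finset.le_inf'; intro j _; split <;> [exact le_refl a; exact hab.le]
      have hs1 : (Finset.univ.sup' ⟨⟨0, by omega⟩, Finset.mem_univ _⟩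
          (fun j : Fin n => if (j:ℕ) = 0 then a else b)) = b := by
        apply le_antisymm
        · apply Finset.sup'_le; intro j _; split <;> [exact hab.le; exact le_refl b]
        · exact le_trans (by simp) (Finset.le_sup' _ (Finset.mem_univ (⟨1, by omega⟩ : Fin n)))
      have hi2 : (Finset.univ.inf' ⟨⟨0, by omega⟩, Finset.mem_univ _⟩
          (fun j : Fin n => if (j:ℕ) = 0 then b else a)) = a := by
        apply le_antisymm
        · exact (Finset.inf'_le _ (Finset.mem_univ (⟨1, by omega⟩ : Fin n))).trans_eq (by simp)
        · apply Finset.le_inf'; intro j _; split <;> [exact hab.le; exact le_refl a]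
      have hs2 : (Finset.univ.sup' ⟨⟨0, by omega⟩, Finset.mem_univ _⟩
          (fun j : Fin n => if (j:ℕ) = 0 then b else a)) = b := by
        apply le_antisymm
        · apply Finset.sup'_le; intro j _; split <;> [exact le_refl b; exact hab.le]
        · exact le_trans (by simp) (Finset.le_sup' _ (Finset.mem_univ (⟨0, by omega⟩ : Fin n)))
      rw [hi1, hs1] at h1
      rw [hi2, hs2] at h2
      simp at h1 h2
      exact absurd (h1.trans h2.symm) hab.ne
    }
end
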